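/- Let n ≥ 3 and let Δ ⊂ ℝ^n be the root system of the strange Lie superalgebra p(n), namely Δ := {ε_i − ε_j : i ≠ j} ∪ {ε_i + ε_j : i < j} ∪ {−(ε_i + ε_j) : i < j} ∪ {2ε_i : 1 ≤ i ≤ n} (note −2ε_i ∉ Δ, so Δ ≠ −Δ). Define: P(0) := {ε_i − ε_j : i ≠ j} ∪ {ε_i + ε_j : i < j} ∪ {2ε_i : all i}; P⁻(0) := {ε_i − ε_j : i ≠ j} ∪ {−(ε_i + ε_j) : i < j}; for 1 ≤ n₀ ≤ n − 1, P(n₀) := {ε_i − ε_j : i ≠ j and (i, j ≤ n₀ or i, j > n₀)} ∪ {±(ε_i + ε_j) : i ≤ n₀ < j} ∪ {ε_i − ε_j : i ≤ n₀ < j} ∪ {ε_i + ε_j : i ≤ j ≤ n₀} ∪ {−(ε_i + ε_j) : n₀ < i < j}; and P(n) := {ε_i − ε_j : i ≠ j ≤ n − 1} ∪ {±(ε_i + ε_j) : i < j ≤ n − 1} ∪ {2ε_i : i ≤ n − 1} ∪ {−ε_n + ε_j : j ≤ n − 1} ∪ {−ε_n − ε_j : j ≤ n − 1}. Then: (a)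 a subset P ⊆ Δ is a cominuscule parabolic set of roots of Δ if and only if σ(P) ∈ {P(n₀) : 0 ≤ n₀ ≤ n} ∪ {P⁻(0)} for some σ ∈ S_n; each of these n + 2 sets is itself a cominuscule parabolic set of roots and no two of them lie in the same S_n-orbit; (b) every cominuscule parabolic set of roots of Δ has a unique Levi decomposition, i.e. the pair (L, N⁺) is the same for all parabolic sets P̃ of Δ ∪ (−Δ) with P̃ ∩ Δ = P. -/

import Mathlib

open Pointwise

/-- A subset `Pt` of a symmetric set `Φ` (`Φ = -Φ`) is a parabolic set if it is proper,
`Φ = Pt ∪ (-Pt)`, and `Pt` is closed under sums lying in `Φ`. -/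
def IsParabolicIn {V : Type*} [AddCommGroup V] (Φ Pt : Set V) : Prop :=
  Pt ⊂ Φ ∧ Φ = Pt ∪ (-Pt) ∧ ∀ α ∈ Pt, ∀ β ∈ Pt, α + β ∈ Φ → α + β ∈ Pt

/-- A proper subset `P` of `Δ` is a parabolic set of roots if `P = Pt ∩ Δ` for some
parabolic set `Pt` of `Δ ∪ (-Δ)`. -/
def IsParabolicRoots {V : Type*} [AddCommGroup V] (Δ P : Set V) : Prop :=
  P ⊂ Δ ∧ ∃ Pt, IsParabolicIn (Δ ∪ -Δ) Pt ∧ P = Pt ∩ Δ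

/-- `P = L ⊔ N` is a Levi decomposition of the parabolic set of roots `P`, coming from
a parabolic set `Pt` of `Δ ∪ (-Δ)`. -/
def IsLeviDecomp {V : Type*} [AddCommGroup V] (Δ P L N : Set V) : Prop :=
  ∃ Pt, IsParabolicIn (Δ ∪ -Δ) Pt ∧ P = Pt ∩ Δ ∧
    L = Pt ∩ (-Pt) ∩ Δ ∧ N = (Pt \ (-Pt)) ∩ Δ

/-- A parabolic set of roots is cominuscule if it admits a nilradical `N` such that the
sum of any two elements of `N` is not a root. -/
def IsCominusculeRoots {V : Type*} [AddCommGroup V] (Δ P : Set V) : Prop :=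
  IsParabolicRoots Δ P ∧
    ∃ L N, IsLeviDecomp Δ P L N ∧ ∀ α ∈ N, ∀ β ∈ N, α + β ∉ Δ

namespace Pn

variable {n : ℕ}

noncomputable def ε (i : Fin n) : Fin n → ℝ := Pi.single i 1

/-- The root system of the strange Lie superalgebra `p(n)`. -/
noncomputable def Δroot (n : ℕ) : Set (Fin n → ℝ) :=
  {v | ∃ i j : Fin n, i ≠ j ∧ v = ε i - ε j} ∪
  {v | ∃ i j : Fin n, i < j ∧ v = ε i + ε j} ∪
  {v | ∃ i j : Fin n, i < j ∧ v = -(ε i + ε j)} ∪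
  {v | ∃ i : Fin n, v = (2 : ℝ) • ε i}

/-- `P(0)`. -/
noncomputable def P0 (n : ℕ) : Set (Fin n → ℝ) :=
  {v | ∃ i j : Fin n, i ≠ j ∧ v = ε i - ε j} ∪
  {v | ∃ i j : Fin n, i < j ∧ v = ε i + ε j} ∪
  {v | ∃ i : Fin n, v = (2 : ℝ) • ε i}

/-- `P⁻(0)`. -/
noncomputable def Pminus0 (n : ℕ) : Set (Fin n → ℝ) :=
  {v | ∃ i j : Fin n, i ≠ j ∧ v = ε i - ε j} ∪
  {v | ∃ i j : Fin n, i < j ∧ v = -(ε i + ε j)}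

/-- `P(n₀)` for `1 ≤ n₀ ≤ n-1` (1-based `i ≤ n₀` becomes 0-based `(i:ℕ) < n₀`). -/
noncomputable def Pmid (n n₀ : ℕ) : Set (Fin n → ℝ) :=
  {v | ∃ i j : Fin n, i ≠ j ∧
      (((i : ℕ) < n₀ ∧ (j : ℕ) < n₀) ∨ (n₀ ≤ (i : ℕ) ∧ n₀ ≤ (j : ℕ))) ∧ v = ε i - ε j} ∪
  {v | ∃ i j : Fin n, (i : ℕ) < n₀ ∧ n₀ ≤ (j : ℕ) ∧
      (v = ε i + ε j ∨ v = -(ε i + ε j))} ∪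
  {v | ∃ i j : Fin n, (i : ℕ) < n₀ ∧ n₀ ≤ (j : ℕ) ∧ v = ε i - ε j} ∪
  {v | ∃ i j : Fin n, (i : ℕ) ≤ (j : ℕ) ∧ (j : ℕ) < n₀ ∧ v = ε i + ε j} ∪
  {v | ∃ i j : Fin n, n₀ ≤ (i : ℕ) ∧ i < j ∧ v = -(ε i + ε j)}

/-- `P(n)` (here `ε_n` is the basis vector with 0-based index `n-1`). -/
noncomputable def Plast (n : ℕ) : Set (Fin n → ℝ) :=
  {v | ∃ i j : Fin n, i ≠ j ∧ (i : ℕ) < n - 1 ∧ (j : ℕ) < n - 1 ∧ v = ε i - ε j} ∪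
  {v | ∃ i j : Fin n, i < j ∧ (j : ℕ) < n - 1 ∧ (v = ε i + ε j ∨ v = -(ε i + ε j))} ∪
  {v | ∃ i : Fin n, (i : ℕ) < n - 1 ∧ v = (2 : ℝ) • ε i} ∪
  {v | ∃ i j : Fin n, (i : ℕ) = n - 1 ∧ (j : ℕ) < n - 1 ∧ v = -ε i + ε j} ∪
  {v | ∃ i j : Fin n, (i : ℕ) = n - 1 ∧ (j : ℕ) < n - 1 ∧ v = -ε i - ε j}

/-- The representatives `P(n₀)`, `0 ≤ n₀ ≤ n`. -/
noncomputable def P (n n₀ : ℕ) : Set (Fin n → ℝ) :=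
  if n₀ = 0 then P0 n else if n₀ = n then Plast n else Pmid n n₀

/-- The action of `σ ∈ Sₙ` on `ℝⁿ` permuting the `εᵢ`. -/
def act (σ : Equiv.Perm (Fin n)) : (Fin n → ℝ) → (Fin n → ℝ) :=
  fun v => v ∘ σ.symm

end Pn

namespace Pn
variable {n : ℕ}

/-! ### Basic vectors -/

noncomputable def sub (i j : Fin n) : Fin n → ℝ := ε i - ε j
noncomputable def pos (i j : Fin n) : Fin n → ℝ := ε i + ε j
noncomputable def neg (i j : Fin n) : Fin n → ℝ := -(ε i + ε j)

lemma ε_apply (i k : Fin n) : ε i k = if k = i then 1 else 0 := by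
  simp [ε, Pi.single_apply]

lemma sub_apply (i j k : Fin n) :
    sub i j k = (if k = i then (1:ℝ) else 0) - (if k = j then 1 else 0) := by
  simp [sub, ε_apply]

lemma pos_apply (i j k : Fin n) :
    pos i j k = (if k = i then (1:ℝ) else 0) + (if k = j then 1 else 0) := by
  simp [pos, ε_apply]

lemma two_eq_pos (i : Fin n) : (2:ℝ) • ε i = pos i i := by
  simp [pos, two_smul]

lemma pos_comm (i j : Fin n) : pos i j = pos j i := by simp [pos, add_comm]
lemma neg_comm (i j : Fin n) : neg i j = neg j i := by simp [neg, add_comm]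

lemma sub_add_sub (i j k : Fin n) : sub i j + sub j k = sub i k := by
  simp only [sub]; abel
lemma sub_add_pos (i j k : Fin n) : sub i j + pos j k = pos i k := by
  simp only [sub, pos]; abel
lemma sub_add_neg (i j k : Fin n) : sub i j + neg i k = neg j k := by
  simp only [sub, neg]; abel
lemma pos_add_neg (i j k : Fin n) : pos i j + neg j k = sub i k := by
  simp only [sub, pos, neg]; abel
lemma neg_sub_eq (i j : Fin n) : -sub i j = sub j i := by simp only [sub]; abel
lemma neg_pos_eq (i j : Fin n) : -pos i j = neg i j := by simp only [pos, neg]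
lemma neg_neg_eq (i j : Fin n) : -neg i j = pos i j := by simp only [pos, neg, _root_.neg_neg]

/-! ### The coordinate-sum functional -/

noncomputable def tot (v : Fin n → ℝ) : ℝ := ∑ k, v k

lemma tot_sub (i j : Fin n) : tot (sub i j) = 0 := by
  simp [sub, tot, ε, Finset.sum_sub_distrib]
lemma tot_pos (i j : Fin n) : tot (pos i j) = 2 := by
  simp [pos, tot, ε, Finset.sum_add_distrib]; norm_num
lemma tot_neg' (i j : Fin n) : tot (neg i j) = -2 := by
  simp [neg, tot, ε, Finset.sum_add_distrib]; norm_num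

lemma sub_ne_pos {i j k l : Fin n} : sub i j ≠ pos k l := fun h => by
  have := congrArg tot h; rw [tot_sub, tot_pos] at this; norm_num at this
lemma sub_ne_neg {i j k l : Fin n} : sub i j ≠ neg k l := fun h => by
  have := congrArg tot h; rw [tot_sub, tot_neg'] at this; norm_num at this
lemma pos_ne_neg {i j k l : Fin n} : pos i j ≠ neg k l := fun h => by
  have := congrArg tot h; rw [tot_pos, tot_neg'] at this; norm_num at this

lemma ε_inj {i j : Fin n} (h : ε i = ε j) : i = j := by
  have := congrFun h i
  rw [ε_apply, ε_apply, if_pos rfl] at this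
  by_contra hij
  rw [if_neg hij] at this; norm_num at this

lemma sub_eq_sub_iff {i j k l : Fin n} (hij : i ≠ j) (_hkl : k ≠ l) :
    sub i j = sub k l ↔ i = k ∧ j = l := by
  constructor
  · intro h
    have hik : i = k := by
      by_contra hik
      have hi := congrFun h i
      rw [sub_apply, sub_apply, if_pos rfl, if_neg hij, if_neg hik] at hi
      split_ifs at hi <;> norm_num at hi
    subst hik
    refine ⟨rfl, ε_inj ?_⟩
    have : ε i - ε j = ε i - ε l := h
    exact (sub_right_inj.mp this)
  · rintro ⟨rfl, rfl⟩; rfl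

lemma pos_eq_pos_iff {i j k l : Fin n} :
    pos i j = pos k l ↔ (i = k ∧ j = l) ∨ (i = l ∧ j = k) := by
  constructor
  · intro h
    by_cases hik : i = k
    · subst hik
      left
      refine ⟨rfl, ε_inj ?_⟩
      have : ε i + ε j = ε i + ε l := h
      exact add_left_cancel this
    · right
      have hi := congrFun h i
      rw [pos_apply, pos_apply, if_pos rfl, if_neg hik] at hi
      have hil : i = l := by
        by_contra hil
        rw [if_neg hil] at hi
        split_ifs at hi <;> norm_num at hi
      subst hil
      refine ⟨rfl, ε_inj ?_⟩
      have h' : ε i + ε j = ε i + ε k := by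
        have : (pos k i : Fin n → ℝ) = ε i + ε k := add_comm _ _
        exact (h.trans this :)
      exact add_left_cancel h' 
  · rintro (⟨rfl, rfl⟩ | ⟨rfl, rfl⟩)
    · rfl
    · exact pos_comm _ _

lemma neg_eq_neg_iff {i j k l : Fin n} :
    neg i j = neg k l ↔ (i = k ∧ j = l) ∨ (i = l ∧ j = k) := by
  rw [show (neg i j : Fin n → ℝ) = -pos i j from rfl,
    show (neg k l : Fin n → ℝ) = -pos k l from rfl, neg_inj, pos_eq_pos_iff]

end Pn

namespace Pn
variable {n : ℕ}
open Pointwise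

/-! ### Shape framework -/

/-- A "shape set": a set of roots described by predicates on index pairs. -/
def shape (Ps Pp Pm : Fin n → Fin n → Prop) : Set (Fin n → ℝ) :=
  {v | (∃ i j, i ≠ j ∧ Ps i j ∧ v = sub i j) ∨ (∃ i j, Pp i j ∧ v = pos i j) ∨
       (∃ i j, Pm i j ∧ v = neg i j)}

lemma sub_mem_shape_iff {Ps Pp Pm : Fin n → Fin n → Prop} {a b : Fin n} (hab : a ≠ b) :
    sub a b ∈ shape Ps Pp Pm ↔ Ps a b := by
  constructor
  · rintro (⟨i, j, hij, hs, h⟩ | ⟨i, j, hs, h⟩ | ⟨i, j, hs, h⟩)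
    · obtain ⟨rfl, rfl⟩ := (sub_eq_sub_iff hab hij).mp h
      exact hs
    · exact absurd h sub_ne_pos
    · exact absurd h sub_ne_neg
  · intro h; exact Or.inl ⟨a, b, hab, h, rfl⟩

lemma pos_mem_shape_iff {Ps Pp Pm : Fin n → Fin n → Prop} {a b : Fin n}
    (hsym : ∀ i j, Pp i j → Pp j i) :
    pos a b ∈ shape Ps Pp Pm ↔ Pp a b := by
  constructor
  · rintro (⟨i, j, hij, hs, h⟩ | ⟨i, j, hs, h⟩ | ⟨i, j, hs, h⟩)
    · exact absurd h.symm sub_ne_pos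
    · rcases pos_eq_pos_iff.mp h.symm with ⟨rfl, rfl⟩ | ⟨rfl, rfl⟩
      · exact hs
      · exact hsym _ _ hs
    · exact absurd h pos_ne_neg
  · intro h; exact Or.inr (Or.inl ⟨a, b, h, rfl⟩)

lemma neg_mem_shape_iff {Ps Pp Pm : Fin n → Fin n → Prop} {a b : Fin n}
    (hsym : ∀ i j, Pm i j → Pm j i) :
    neg a b ∈ shape Ps Pp Pm ↔ Pm a b := by
  constructor
  · rintro (⟨i, j, hij, hs, h⟩ | ⟨i, j, hs, h⟩ | ⟨i, j, hs, h⟩)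
    · exact absurd h.symm sub_ne_neg
    · exact absurd h.symm pos_ne_neg
    · rcases neg_eq_neg_iff.mp h.symm with ⟨rfl, rfl⟩ | ⟨rfl, rfl⟩
      · exact hs
      · exact hsym _ _ hs
  · intro h; exact Or.inr (Or.inr ⟨a, b, h, rfl⟩)

/-! ### The models as shapes -/

lemma Δroot_eq_shape :
    Δroot n = shape (fun _ _ => True) (fun _ _ => True) (fun i j => i ≠ j) := by
  ext v
  simp only [Δroot, shape, Set.mem_union, Set.mem_setOf_eq]
  constructor
  · rintro (((⟨i, j, hij, rfl⟩ | ⟨i, j, hij, rfl⟩) | ⟨i, j, hij, rfl⟩) | ⟨i, rfl⟩)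
    · exact Or.inl ⟨i, j, hij, trivial, rfl⟩
    · exact Or.inr (Or.inl ⟨i, j, trivial, rfl⟩)
    · exact Or.inr (Or.inr ⟨i, j, hij.ne, rfl⟩)
    · exact Or.inr (Or.inl ⟨i, i, trivial, two_eq_pos i⟩)
  · rintro (⟨i, j, hij, -, rfl⟩ | ⟨i, j, -, rfl⟩ | ⟨i, j, hij, rfl⟩)
    · exact Or.inl (Or.inl (Or.inl ⟨i, j, hij, rfl⟩))
    · rcases lt_trichotomy i j with h | rfl | h
      · exact Or.inl (Or.inl (Or.inr ⟨i, j, h, rfl⟩))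
      · exact Or.inr ⟨i, (two_eq_pos i).symm⟩
      · exact Or.inl (Or.inl (Or.inr ⟨j, i, h, pos_comm i j⟩))
    · rcases lt_or_gt_of_ne hij with h | h
      · exact Or.inl (Or.inr ⟨i, j, h, rfl⟩)
      · exact Or.inl (Or.inr ⟨j, i, h, neg_comm i j⟩)

lemma P0_eq_shape :
    P0 n = shape (fun _ _ => True) (fun _ _ => True) (fun _ _ => False) := by
  ext v
  simp only [P0, shape, Set.mem_union, Set.mem_setOf_eq]
  constructor
  · rintro ((⟨i, j, hij, rfl⟩ | ⟨i, j, hij, rfl⟩) | ⟨i, rfl⟩)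
    · exact Or.inl ⟨i, j, hij, trivial, rfl⟩
    · exact Or.inr (Or.inl ⟨i, j, trivial, rfl⟩)
    · exact Or.inr (Or.inl ⟨i, i, trivial, two_eq_pos i⟩)
  · rintro (⟨i, j, hij, -, rfl⟩ | ⟨i, j, -, rfl⟩ | ⟨i, j, hf, rfl⟩)
    · exact Or.inl (Or.inl ⟨i, j, hij, rfl⟩)
    · rcases lt_trichotomy i j with h | rfl | h
      · exact Or.inl (Or.inr ⟨i, j, h, rfl⟩)
      · exact Or.inr ⟨i, (two_eq_pos i).symm⟩
      · exact Or.inl (Or.inr ⟨j, i, h, pos_comm i j⟩)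
    · exact absurd hf id

lemma Pminus0_eq_shape :
    Pminus0 n = shape (fun _ _ => True) (fun _ _ => False) (fun i j => i ≠ j) := by
  ext v
  simp only [Pminus0, shape, Set.mem_union, Set.mem_setOf_eq]
  constructor
  · rintro (⟨i, j, hij, rfl⟩ | ⟨i, j, hij, rfl⟩)
    · exact Or.inl ⟨i, j, hij, trivial, rfl⟩
    · exact Or.inr (Or.inr ⟨i, j, hij.ne, rfl⟩)
  · rintro (⟨i, j, hij, -, rfl⟩ | ⟨i, j, hf, rfl⟩ | ⟨i, j, hij, rfl⟩)
    · exact Or.inl ⟨i, j, hij, rfl⟩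
    · exact absurd hf id
    · rcases lt_or_gt_of_ne hij with h | h
      · exact Or.inr ⟨i, j, h, rfl⟩
      · exact Or.inr ⟨j, i, h, neg_comm i j⟩

lemma Pmid_eq_shape (p : ℕ) :
    Pmid n p = shape (fun i j => (i:ℕ) < p ∨ p ≤ (j:ℕ))
      (fun i j => (i:ℕ) < p ∨ (j:ℕ) < p)
      (fun i j => i ≠ j ∧ (p ≤ (i:ℕ) ∨ p ≤ (j:ℕ))) := by
  ext v
  simp only [Pmid, shape, Set.mem_union, Set.mem_setOf_eq]
  constructor
  · rintro ((((⟨i, j, hij, hc, rfl⟩ | ⟨i, j, hi, hj, (rfl | rfl)⟩) | ⟨i, j, hi, hj, rfl⟩) |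
      ⟨i, j, hij, hj, rfl⟩) | ⟨i, j, hi, hij, rfl⟩)
    · exact Or.inl ⟨i, j, hij, by omega, rfl⟩
    · exact Or.inr (Or.inl ⟨i, j, Or.inl hi, rfl⟩)
    · exact Or.inr (Or.inr ⟨i, j, ⟨by omega, Or.inr hj⟩, rfl⟩)
    · exact Or.inl ⟨i, j, by omega, Or.inl hi, rfl⟩
    · exact Or.inr (Or.inl ⟨i, j, Or.inl (by omega), rfl⟩)
    · exact Or.inr (Or.inr ⟨i, j, ⟨hij.ne, Or.inl hi⟩, rfl⟩)
  · rintro (⟨i, j, hij, hc, rfl⟩ | ⟨i, j, hc, rfl⟩ | ⟨i, j, ⟨hij, hc⟩, rfl⟩)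
    · rcases hc with hi | hj
      · by_cases hj : (j:ℕ) < p
        · exact Or.inl (Or.inl (Or.inl (Or.inl ⟨i, j, hij, Or.inl ⟨hi, hj⟩, rfl⟩)))
        · exact Or.inl (Or.inl (Or.inr ⟨i, j, hi, by omega, rfl⟩))
      · by_cases hi : (i:ℕ) < p
        · exact Or.inl (Or.inl (Or.inr ⟨i, j, hi, hj, rfl⟩))
        · exact Or.inl (Or.inl (Or.inl (Or.inl ⟨i, j, hij, Or.inr ⟨by omega, hj⟩, rfl⟩)))
    · rcases hc with hi | hj
      · by_cases hj : (j:ℕ) < p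
        · rcases le_total (i:ℕ) (j:ℕ) with hle | hle
          · exact Or.inl (Or.inr ⟨i, j, hle, hj, rfl⟩)
          · exact Or.inl (Or.inr ⟨j, i, hle, hi, pos_comm i j⟩)
        · exact Or.inl (Or.inl (Or.inl (Or.inr ⟨i, j, hi, by omega, Or.inl rfl⟩)))
      · by_cases hi : (i:ℕ) < p
        · rcases le_total (i:ℕ) (j:ℕ) with hle | hle
          · exact Or.inl (Or.inr ⟨i, j, hle, hj, rfl⟩)
          · exact Or.inl (Or.inr ⟨j, i, hle, hi, pos_comm i j⟩)
        · exact Or.inl (Or.inl (Or.inl (Or.inr ⟨j, i, hj, by omega, Or.inl (pos_comm i j)⟩)))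
    · rcases hc with hi | hj
      · rcases lt_or_gt_of_ne hij with h | h
        · exact Or.inr ⟨i, j, hi, h, rfl⟩
        · by_cases hj : p ≤ (j:ℕ)
          · exact Or.inr ⟨j, i, hj, h, neg_comm i j⟩
          · exact Or.inl (Or.inl (Or.inl (Or.inr ⟨j, i, by omega, hi, Or.inr (neg_comm i j)⟩)))
      · rcases lt_or_gt_of_ne hij with h | h
        · by_cases hi : p ≤ (i:ℕ)
          · exact Or.inr ⟨i, j, hi, h, rfl⟩
          · exact Or.inl (Or.inl (Or.inl (Or.inr ⟨i, j, by omega, hj, Or.inr rfl⟩)))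
        · exact Or.inr ⟨j, i, hj, h, neg_comm i j⟩

lemma Plast_eq_shape :
    Plast n = shape (fun i _ => (i:ℕ) < n - 1)
      (fun i j => (i:ℕ) < n - 1 ∧ (j:ℕ) < n - 1) (fun i j => i ≠ j) := by
  ext v
  simp only [Plast, shape, Set.mem_union, Set.mem_setOf_eq]
  constructor
  · rintro ((((⟨i, j, hij, hi, hj, rfl⟩ | ⟨i, j, hij, hj, (rfl | rfl)⟩) | ⟨i, hi, rfl⟩) |
      ⟨i, j, hi, hj, rfl⟩) | ⟨i, j, hi, hj, rfl⟩)
    · exact Or.inl ⟨i, j, hij, hi, rfl⟩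
    · exact Or.inr (Or.inl ⟨i, j, ⟨by omega, hj⟩, rfl⟩)
    · exact Or.inr (Or.inr ⟨i, j, hij.ne, rfl⟩)
    · exact Or.inr (Or.inl ⟨i, i, ⟨hi, hi⟩, two_eq_pos i⟩)
    · refine Or.inl ⟨j, i, ?_, by omega, ?_⟩
      · intro h; subst h; omega
      · rw [sub]; abel
    · refine Or.inr (Or.inr ⟨i, j, ?_, ?_⟩)
      · intro h; subst h; omega
      · rw [neg]; abel
  · rintro (⟨i, j, hij, hi, rfl⟩ | ⟨i, j, ⟨hi, hj⟩, rfl⟩ | ⟨i, j, hij, rfl⟩)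
    · by_cases hj : (j:ℕ) < n - 1
      · exact Or.inl (Or.inl (Or.inl (Or.inl ⟨i, j, hij, hi, hj, rfl⟩)))
      · refine Or.inl (Or.inr ⟨j, i, by omega, hi, ?_⟩)
        rw [sub]; abel
    · rcases lt_trichotomy i j with h | rfl | h
      · exact Or.inl (Or.inl (Or.inl (Or.inr ⟨i, j, h, hj, Or.inl rfl⟩)))
      · exact Or.inl (Or.inl (Or.inr ⟨i, hi, (two_eq_pos i).symm⟩))
      · exact Or.inl (Or.inl (Or.inl (Or.inr ⟨j, i, h, hi, Or.inl (pos_comm i j)⟩)))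
    · have hle : (i:ℕ) ≤ n - 1 := by omega
      have hle' : (j:ℕ) ≤ n - 1 := by omega
      by_cases hi : (i:ℕ) < n - 1
      · by_cases hj : (j:ℕ) < n - 1
        · rcases lt_or_gt_of_ne hij with h | h
          · exact Or.inl (Or.inl (Or.inl (Or.inr ⟨i, j, h, hj, Or.inr rfl⟩)))
          · exact Or.inl (Or.inl (Or.inl (Or.inr ⟨j, i, h, hi, Or.inr (neg_comm i j)⟩)))
        · refine Or.inr ⟨j, i, by omega, hi, ?_⟩
          rw [neg]; abel
      · have hjn : (j:ℕ) < n - 1 := by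
          rcases Nat.lt_or_ge (j:ℕ) (n-1) with h | h
          · exact h
          · exact absurd (Fin.val_injective (by omega : (i:ℕ) = (j:ℕ))) hij
        refine Or.inr ⟨i, j, by omega, hjn, ?_⟩
        rw [neg]; abel

end Pn

namespace Pn
variable {n : ℕ}
open Pointwise

/-! ### The symmetric set Φ = Δ ∪ -Δ -/

lemma neg_mem_Φ {v : Fin n → ℝ} (h : v ∈ Δroot n ∪ -Δroot n) :
    -v ∈ Δroot n ∪ -Δroot n := by
  rcases h with h | h
  · exact Or.inr (by rwa [Set.mem_neg, _root_.neg_neg])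
  · exact Or.inl (Set.mem_neg.mp h)

lemma Φ_eq_shape : Δroot n ∪ -Δroot n =
    shape (fun _ _ => True) (fun _ _ => True) (fun _ _ => True) := by
  ext v
  constructor
  · rintro (h | h)
    · rw [Δroot_eq_shape] at h
      rcases h with ⟨i, j, hij, -, rfl⟩ | ⟨i, j, -, rfl⟩ | ⟨i, j, -, rfl⟩
      · exact Or.inl ⟨i, j, hij, trivial, rfl⟩
      · exact Or.inr (Or.inl ⟨i, j, trivial, rfl⟩)
      · exact Or.inr (Or.inr ⟨i, j, trivial, rfl⟩)
    · rw [Set.mem_neg, Δroot_eq_shape] at h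
      rcases h with ⟨i, j, hij, -, h⟩ | ⟨i, j, -, h⟩ | ⟨i, j, -, h⟩
      · refine Or.inl ⟨j, i, hij.symm, trivial, ?_⟩
        rw [← neg_sub_eq, ← h, _root_.neg_neg]
      · refine Or.inr (Or.inr ⟨i, j, trivial, ?_⟩)
        rw [← neg_pos_eq, ← h, _root_.neg_neg]
      · refine Or.inr (Or.inl ⟨i, j, trivial, ?_⟩)
        rw [← neg_neg_eq, ← h, _root_.neg_neg]
  · rintro (⟨i, j, hij, -, rfl⟩ | ⟨i, j, -, rfl⟩ | ⟨i, j, -, rfl⟩)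
    · exact Or.inl (by rw [Δroot_eq_shape]; exact Or.inl ⟨i, j, hij, trivial, rfl⟩)
    · exact Or.inl (by rw [Δroot_eq_shape]; exact Or.inr (Or.inl ⟨i, j, trivial, rfl⟩))
    · by_cases hij : i = j
      · subst hij
        refine Or.inr ?_
        rw [Set.mem_neg, neg_neg_eq, Δroot_eq_shape]
        exact Or.inr (Or.inl ⟨i, i, trivial, rfl⟩)
      · exact Or.inl (by rw [Δroot_eq_shape]; exact Or.inr (Or.inr ⟨i, j, hij, rfl⟩))

lemma sub_mem_Δ {a b : Fin n} (h : a ≠ b) : sub a b ∈ Δroot n := by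
  rw [Δroot_eq_shape]; exact Or.inl ⟨a, b, h, trivial, rfl⟩
lemma pos_mem_Δ (a b : Fin n) : pos a b ∈ Δroot n := by
  rw [Δroot_eq_shape]; exact Or.inr (Or.inl ⟨a, b, trivial, rfl⟩)
lemma neg_mem_Δ {a b : Fin n} (h : a ≠ b) : neg a b ∈ Δroot n := by
  rw [Δroot_eq_shape]; exact Or.inr (Or.inr ⟨a, b, h, rfl⟩)
lemma neg_self_not_mem_Δ (a : Fin n) : neg a a ∉ Δroot n := by
  rw [Δroot_eq_shape]
  exact fun h => by simpa using (neg_mem_shape_iff (fun i j h => h.symm)).mp h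
lemma sub_mem_Φ {a b : Fin n} (h : a ≠ b) : sub a b ∈ Δroot n ∪ -Δroot n :=
  Or.inl (sub_mem_Δ h)
lemma pos_mem_Φ (a b : Fin n) : pos a b ∈ Δroot n ∪ -Δroot n :=
  Or.inl (pos_mem_Δ a b)
lemma neg_mem_Φ' (a b : Fin n) : neg a b ∈ Δroot n ∪ -Δroot n := by
  rw [Φ_eq_shape]; exact Or.inr (Or.inr ⟨a, b, trivial, rfl⟩)

/-! ### Linear functionals -/

noncomputable def F (f : Fin n → ℝ) (v : Fin n → ℝ) : ℝ := ∑ k, f k * v k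

lemma F_add (f u v : Fin n → ℝ) : F f (u + v) = F f u + F f v := by
  simp [F, mul_add, Finset.sum_add_distrib]
lemma F_negv (f v : Fin n → ℝ) : F f (-v) = -F f v := by
  simp [F]
lemma F_ε (f : Fin n → ℝ) (i : Fin n) : F f (ε i) = f i := by
  simp [F, ε, Pi.single_apply, mul_ite]
lemma F_sub (f : Fin n → ℝ) (i j : Fin n) : F f (sub i j) = f i - f j := by
  rw [show (sub i j : Fin n → ℝ) = ε i + (- ε j) by rw [sub]; abel, F_add, F_negv, F_ε, F_ε]
  ring
lemma F_pos (f : Fin n → ℝ) (i j : Fin n) : F f (pos i j) = f i + f j := by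
  rw [pos, F_add, F_ε, F_ε]
lemma F_neg (f : Fin n → ℝ) (i j : Fin n) : F f (neg i j) = -(f i + f j) := by
  rw [neg, F_negv, F_add, F_ε, F_ε]

/-- The parabolic set of Φ attached to a functional. -/
noncomputable def Ptf (f : Fin n → ℝ) : Set (Fin n → ℝ) :=
  {v | v ∈ Δroot n ∪ -Δroot n ∧ 0 ≤ F f v}

lemma Ptf_parabolic (f : Fin n → ℝ) (w : Fin n → ℝ) (hw : w ∈ Δroot n ∪ -Δroot n)
    (hFw : F f w < 0) : IsParabolicIn (Δroot n ∪ -Δroot n) (Ptf f) := by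
  refine ⟨⟨fun v hv => hv.1, fun hΦ => absurd (hΦ hw).2 (by linarith)⟩, ?_, ?_⟩
  · apply Set.Subset.antisymm
    · intro v hv
      rcases le_or_gt 0 (F f v) with h | h
      · exact Or.inl ⟨hv, h⟩
      · refine Or.inr (Set.mem_neg.mpr ⟨neg_mem_Φ hv, ?_⟩)
        rw [F_negv]; linarith
    · rintro v (hv | hv)
      · exact hv.1
      · rw [Set.mem_neg] at hv
        have := neg_mem_Φ hv.1
        rwa [_root_.neg_neg] at this
  · rintro α ⟨hα, hFα⟩ β ⟨hβ, hFβ⟩ hs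
    exact ⟨hs, by rw [F_add]; linarith⟩

lemma mem_N_Ptf {f : Fin n → ℝ} {α : Fin n → ℝ}
    (h : α ∈ (Ptf f \ -(Ptf f)) ∩ Δroot n) : α ∈ Δroot n ∧ 0 < F f α := by
  obtain ⟨⟨⟨hΦ, hF⟩, hns⟩, hΔ⟩ := h
  refine ⟨hΔ, ?_⟩
  rcases eq_or_lt_of_le hF with h0 | h0
  · exfalso
    exact hns (Set.mem_neg.mpr ⟨neg_mem_Φ hΦ, by rw [F_negv, ← h0]; norm_num⟩)
  · exact h0

/-- The master cominuscularity criterion. -/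
lemma cominuscule_of_bounds (f : Fin n → ℝ) (c : ℝ)
    (hb : ∀ v ∈ Δroot n, F f v ≤ c) (hs : ∀ v ∈ Δroot n, 0 < F f v → c < 2 * F f v) :
    ∀ α ∈ (Ptf f \ -(Ptf f)) ∩ Δroot n, ∀ β ∈ (Ptf f \ -(Ptf f)) ∩ Δroot n,
      α + β ∉ Δroot n := by
  intro α hα β hβ hsum
  obtain ⟨hαΔ, hαF⟩ := mem_N_Ptf hα
  obtain ⟨hβΔ, hβF⟩ := mem_N_Ptf hβ
  have h1 := hs α hαΔ hαF
  have h2 := hs β hβΔ hβF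
  have h3 := hb _ hsum
  rw [F_add] at h3
  linarith

end Pn

namespace Pn
variable {n : ℕ}
open Pointwise

/-! ### models are cominuscule -/

noncomputable def f0 : Fin n → ℝ := fun _ => 1
noncomputable def fm0 : Fin n → ℝ := fun _ => -1
noncomputable def fmid (p : ℕ) : Fin n → ℝ := fun i => if (i:ℕ) < p then 1 else -1
noncomputable def flast : Fin n → ℝ := fun i => if (i:ℕ) = n - 1 then -1 else 0

lemma P0_eq_Ptf : P0 n = Ptf f0 ∩ Δroot n := by
  ext v
  constructor
  · intro hv
    rw [P0_eq_shape] at hv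
    rcases hv with ⟨i, j, hij, -, rfl⟩ | ⟨i, j, -, rfl⟩ | ⟨i, j, hf, rfl⟩
    · exact ⟨⟨sub_mem_Φ hij, by rw [F_sub]; simp [f0]⟩, sub_mem_Δ hij⟩
    · exact ⟨⟨pos_mem_Φ i j, by rw [F_pos]; norm_num [f0]⟩, pos_mem_Δ i j⟩
    · exact absurd hf id
  · rintro ⟨⟨-, hF⟩, hΔ⟩
    rw [Δroot_eq_shape] at hΔ
    rw [P0_eq_shape]
    rcases hΔ with ⟨i, j, hij, -, rfl⟩ | ⟨i, j, -, rfl⟩ | ⟨i, j, hij, rfl⟩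
    · exact Or.inl ⟨i, j, hij, trivial, rfl⟩
    · exact Or.inr (Or.inl ⟨i, j, trivial, rfl⟩)
    · rw [F_neg] at hF; simp [f0] at hF; linarith

lemma Pminus0_eq_Ptf : Pminus0 n = Ptf fm0 ∩ Δroot n := by
  ext v
  constructor
  · intro hv
    rw [Pminus0_eq_shape] at hv
    rcases hv with ⟨i, j, hij, -, rfl⟩ | ⟨i, j, hf, rfl⟩ | ⟨i, j, hij, rfl⟩
    · exact ⟨⟨sub_mem_Φ hij, by rw [F_sub]; simp [fm0]⟩, sub_mem_Δ hij⟩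
    · exact absurd hf id
    · exact ⟨⟨neg_mem_Φ' i j, by rw [F_neg]; norm_num [fm0]⟩, neg_mem_Δ hij⟩
  · rintro ⟨⟨-, hF⟩, hΔ⟩
    rw [Δroot_eq_shape] at hΔ
    rw [Pminus0_eq_shape]
    rcases hΔ with ⟨i, j, hij, -, rfl⟩ | ⟨i, j, -, rfl⟩ | ⟨i, j, hij, rfl⟩
    · exact Or.inl ⟨i, j, hij, trivial, rfl⟩
    · rw [F_pos] at hF; simp [fm0] at hF; linarith
    · exact Or.inr (Or.inr ⟨i, j, hij, rfl⟩)

lemma Pmid_eq_Ptf (p : ℕ) : Pmid n p = Ptf (fmid p) ∩ Δroot n := by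
  ext v
  constructor
  · intro hv
    rw [Pmid_eq_shape] at hv
    rcases hv with ⟨i, j, hij, hc, rfl⟩ | ⟨i, j, hc, rfl⟩ | ⟨i, j, ⟨hij, hc⟩, rfl⟩
    · refine ⟨⟨sub_mem_Φ hij, ?_⟩, sub_mem_Δ hij⟩
      rcases hc with hc | hc <;>
        (rw [F_sub]; unfold fmid; split_ifs with h1 h2 h2 <;> first | (exfalso; omega) | norm_num)
    · refine ⟨⟨pos_mem_Φ i j, ?_⟩, pos_mem_Δ i j⟩
      rcases hc with hc | hc <;>
        (rw [F_pos]; unfold fmid; split_ifs with h1 h2 h2 <;> first | (exfalso; omega) | norm_num)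
    · refine ⟨⟨neg_mem_Φ' i j, ?_⟩, neg_mem_Δ hij⟩
      rcases hc with hc | hc <;>
        (rw [F_neg]; unfold fmid; split_ifs with h1 h2 h2 <;> first | (exfalso; omega) | norm_num)
  · rintro ⟨⟨-, hF⟩, hΔ⟩
    rw [Δroot_eq_shape] at hΔ
    rw [Pmid_eq_shape]
    rcases hΔ with ⟨i, j, hij, -, rfl⟩ | ⟨i, j, -, rfl⟩ | ⟨i, j, hij, rfl⟩
    · refine Or.inl ⟨i, j, hij, ?_, rfl⟩
      rw [F_sub] at hF; unfold fmid at hF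
      split_ifs at hF with h1 h2 h2 <;> first | omega | (exfalso; linarith)
    · refine Or.inr (Or.inl ⟨i, j, ?_, rfl⟩)
      rw [F_pos] at hF; unfold fmid at hF
      split_ifs at hF with h1 h2 h2 <;> first | omega | (exfalso; linarith)
    · refine Or.inr (Or.inr ⟨i, j, ⟨hij, ?_⟩, rfl⟩)
      rw [F_neg] at hF; unfold fmid at hF
      split_ifs at hF with h1 h2 h2 <;> first | omega | (exfalso; linarith)

lemma Plast_eq_Ptf : Plast n = Ptf flast ∩ Δroot n := by
  ext v
  constructor
  · intro hv
    rw [Plast_eq_shape] at hv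
    rcases hv with ⟨i, j, hij, hc, rfl⟩ | ⟨i, j, ⟨hi, hj⟩, rfl⟩ | ⟨i, j, hij, rfl⟩
    · refine ⟨⟨sub_mem_Φ hij, ?_⟩, sub_mem_Δ hij⟩
      rw [F_sub]; unfold flast; split_ifs with h1 h2 h2 <;> first | (exfalso; omega) | norm_num
    · refine ⟨⟨pos_mem_Φ i j, ?_⟩, pos_mem_Δ i j⟩
      rw [F_pos]; unfold flast; split_ifs with h1 h2 h2 <;> first | (exfalso; omega) | norm_num
    · refine ⟨⟨neg_mem_Φ' i j, ?_⟩, neg_mem_Δ hij⟩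
      rw [F_neg]; unfold flast; split_ifs with h1 h2 h2 <;> norm_num
  · rintro ⟨⟨-, hF⟩, hΔ⟩
    rw [Δroot_eq_shape] at hΔ
    rw [Plast_eq_shape]
    rcases hΔ with ⟨i, j, hij, -, rfl⟩ | ⟨i, j, -, rfl⟩ | ⟨i, j, hij, rfl⟩
    · refine Or.inl ⟨i, j, hij, ?_, rfl⟩
      rw [F_sub] at hF; unfold flast at hF
      have hi := i.isLt
      split_ifs at hF with h1 h2 h2 <;> first | omega | (exfalso; linarith)
    · refine Or.inr (Or.inl ⟨i, j, ?_, rfl⟩)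
      rw [F_pos] at hF; unfold flast at hF
      have hi := i.isLt
      have hj := j.isLt
      constructor <;>
        · split_ifs at hF with h1 h2 h2 <;> first | omega | (exfalso; linarith)
    · exact Or.inr (Or.inr ⟨i, j, hij, rfl⟩)

lemma bounds_f0 : (∀ v ∈ Δroot n, F f0 v ≤ 2) ∧
    (∀ v ∈ Δroot n, 0 < F f0 v → 2 < 2 * F f0 v) := by
  constructor <;>
  · intro v hv
    rw [Δroot_eq_shape] at hv
    rcases hv with ⟨i, j, hij, -, rfl⟩ | ⟨i, j, -, rfl⟩ | ⟨i, j, hij, rfl⟩ <;>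
      simp only [F_sub, F_pos, F_neg, f0] <;> norm_num

lemma bounds_fm0 : (∀ v ∈ Δroot n, F fm0 v ≤ 2) ∧
    (∀ v ∈ Δroot n, 0 < F fm0 v → 2 < 2 * F fm0 v) := by
  constructor <;>
  · intro v hv
    rw [Δroot_eq_shape] at hv
    rcases hv with ⟨i, j, hij, -, rfl⟩ | ⟨i, j, -, rfl⟩ | ⟨i, j, hij, rfl⟩ <;>
      simp only [F_sub, F_pos, F_neg, fm0] <;> norm_num

lemma bounds_fmid (p : ℕ) : (∀ v ∈ Δroot n, F (fmid p) v ≤ 2) ∧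
    (∀ v ∈ Δroot n, 0 < F (fmid p) v → 2 < 2 * F (fmid p) v) := by
  constructor <;>
  · intro v hv
    rw [Δroot_eq_shape] at hv
    rcases hv with ⟨i, j, hij, -, rfl⟩ | ⟨i, j, -, rfl⟩ | ⟨i, j, hij, rfl⟩ <;>
      simp only [F_sub, F_pos, F_neg, fmid] <;> split_ifs <;>
        first | (exfalso; exact hij (Fin.val_injective (by omega))) | norm_num

lemma bounds_flast : (∀ v ∈ Δroot n, F flast v ≤ 1) ∧
    (∀ v ∈ Δroot n, 0 < F flast v → 1 < 2 * F flast v) := by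
  constructor <;>
  · intro v hv
    rw [Δroot_eq_shape] at hv
    rcases hv with ⟨i, j, hij, -, rfl⟩ | ⟨i, j, -, rfl⟩ | ⟨i, j, hij, rfl⟩ <;>
      simp only [F_sub, F_pos, F_neg, flast] <;> split_ifs <;>
        first | (exfalso; exact hij (Fin.val_injective (by omega))) | norm_num

/-- Assemble cominuscularity from the pieces. -/
lemma isCom_of_Ptf (M : Set (Fin n → ℝ)) (f : Fin n → ℝ) (c : ℝ)
    (hM : M = Ptf f ∩ Δroot n)
    (w : Fin n → ℝ) (hw : w ∈ Δroot n) (hFw : F f w < 0)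
    (hb : ∀ v ∈ Δroot n, F f v ≤ c) (hs : ∀ v ∈ Δroot n, 0 < F f v → c < 2 * F f v) :
    IsCominusculeRoots (Δroot n) M := by
  have hpar := Ptf_parabolic f w (Or.inl hw) hFw
  have hss : M ⊂ Δroot n := by
    rw [hM]
    refine ⟨Set.inter_subset_right, fun hsub => ?_⟩
    have := (hsub hw).1.2
    linarith
  exact ⟨⟨hss, Ptf f, hpar, hM⟩,
    Ptf f ∩ -(Ptf f) ∩ Δroot n, (Ptf f \ -(Ptf f)) ∩ Δroot n,
    ⟨Ptf f, hpar, hM, rfl, rfl⟩, cominuscule_of_bounds f c hb hs⟩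

lemma isCom_P0 (hn : 2 ≤ n) : IsCominusculeRoots (Δroot n) (P0 n) := by
  have h01 : ((⟨0, by omega⟩ : Fin n)) ≠ ⟨1, by omega⟩ := by
    intro h; simpa using congrArg Fin.val h
  refine isCom_of_Ptf _ f0 2 P0_eq_Ptf (neg ⟨0, by omega⟩ ⟨1, by omega⟩)
    (neg_mem_Δ h01) ?_ bounds_f0.1 bounds_f0.2
  rw [F_neg]; norm_num [f0]

lemma isCom_Pminus0 (hn : 1 ≤ n) : IsCominusculeRoots (Δroot n) (Pminus0 n) := by
  refine isCom_of_Ptf _ fm0 2 Pminus0_eq_Ptf (pos ⟨0, by omega⟩ ⟨0, by omega⟩)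
    (pos_mem_Δ _ _) ?_ bounds_fm0.1 bounds_fm0.2
  rw [F_pos]; norm_num [fm0]

lemma isCom_Pmid {p : ℕ} (hp : 1 ≤ p) (hpn : p < n) :
    IsCominusculeRoots (Δroot n) (Pmid n p) := by
  have hne : ((⟨p, hpn⟩ : Fin n)) ≠ ⟨0, by omega⟩ := by
    intro h; have := congrArg Fin.val h; simp at this; omega
  refine isCom_of_Ptf _ (fmid p) 2 (Pmid_eq_Ptf p) (sub ⟨p, hpn⟩ ⟨0, by omega⟩)
    (sub_mem_Δ hne) ?_ (bounds_fmid p).1 (bounds_fmid p).2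
  rw [F_sub]; unfold fmid; simp only [Fin.val_mk]
  split_ifs <;> first | (exfalso; omega) | norm_num

lemma isCom_Plast (hn : 1 ≤ n) : IsCominusculeRoots (Δroot n) (Plast n) := by
  refine isCom_of_Ptf _ flast 1 Plast_eq_Ptf (pos ⟨n-1, by omega⟩ ⟨n-1, by omega⟩)
    (pos_mem_Δ _ _) ?_ bounds_flast.1 bounds_flast.2
  rw [F_pos]; unfold flast; simp only [Fin.val_mk]
  split_ifs <;> first | (exfalso; omega) | norm_num

end Pn

namespace Pn
variable {n : ℕ}
open Pointwise

/-! ### Equivariance under the symmetric group -/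

lemma act_add (σ : Equiv.Perm (Fin n)) (u v : Fin n → ℝ) :
    act σ (u + v) = act σ u + act σ v := rfl
lemma act_negv (σ : Equiv.Perm (Fin n)) (v : Fin n → ℝ) :
    act σ (-v) = -act σ v := rfl
lemma act_ε (σ : Equiv.Perm (Fin n)) (i : Fin n) : act σ (ε i) = ε (σ i) := by
  funext k
  simp only [act, Function.comp_apply, ε, Pi.single_apply]
  by_cases h : σ.symm k = i
  · rw [if_pos h, if_pos (by rw [← h, Equiv.apply_symm_apply])]
  · rw [if_neg h, if_neg (fun hh => h (by rw [hh, Equiv.symm_apply_apply]))]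
lemma act_sub (σ : Equiv.Perm (Fin n)) (i j : Fin n) :
    act σ (sub i j) = sub (σ i) (σ j) := by
  have : act σ (sub i j) = act σ (ε i) - act σ (ε j) := rfl
  rw [this, act_ε, act_ε]; rfl
lemma act_pos (σ : Equiv.Perm (Fin n)) (i j : Fin n) :
    act σ (pos i j) = pos (σ i) (σ j) := by
  have : act σ (pos i j) = act σ (ε i) + act σ (ε j) := rfl
  rw [this, act_ε, act_ε]; rfl
lemma act_neg (σ : Equiv.Perm (Fin n)) (i j : Fin n) :
    act σ (neg i j) = neg (σ i) (σ j) := by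
  have : act σ (neg i j) = -(act σ (ε i) + act σ (ε j)) := rfl
  rw [this, act_ε, act_ε]; rfl

lemma act_act (σ : Equiv.Perm (Fin n)) (v : Fin n → ℝ) : act σ (act σ.symm v) = v := by
  funext k
  simp [act]
lemma act_act' (σ : Equiv.Perm (Fin n)) (v : Fin n → ℝ) : act σ.symm (act σ v) = v := by
  funext k
  simp [act]

lemma act_injective (σ : Equiv.Perm (Fin n)) : Function.Injective (act σ) := by
  intro u v h
  have := congrArg (act σ.symm) h
  rwa [act_act', act_act'] at this

lemma mem_act_image {σ : Equiv.Perm (Fin n)} {S : Set (Fin n → ℝ)} {v : Fin n → ℝ} :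
    v ∈ act σ '' S ↔ act σ.symm v ∈ S := by
  constructor
  · rintro ⟨w, hw, rfl⟩; rwa [act_act']
  · intro h; exact ⟨act σ.symm v, h, act_act σ v⟩

lemma act_image_Δ (σ : Equiv.Perm (Fin n)) : act σ '' Δroot n = Δroot n := by
  have key : ∀ (τ : Equiv.Perm (Fin n)) (v : Fin n → ℝ), v ∈ Δroot n → act τ v ∈ Δroot n := by
    intro τ v hv
    rw [Δroot_eq_shape] at hv
    rcases hv with ⟨i, j, hij, -, rfl⟩ | ⟨i, j, -, rfl⟩ | ⟨i, j, hij, rfl⟩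
    · rw [act_sub]; exact sub_mem_Δ (fun h => hij (τ.injective h))
    · rw [act_pos]; exact pos_mem_Δ _ _
    · rw [act_neg]; exact neg_mem_Δ (fun h => hij (τ.injective h))
  apply Set.Subset.antisymm
  · rintro v ⟨w, hw, rfl⟩; exact key σ w hw
  · intro v hv
    rw [mem_act_image]
    exact key σ.symm v hv

lemma act_image_neg (σ : Equiv.Perm (Fin n)) (S : Set (Fin n → ℝ)) :
    act σ '' (-S) = -(act σ '' S) := by
  ext v
  rw [mem_act_image, Set.mem_neg, Set.mem_neg, mem_act_image]
  exact Iff.rfl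

lemma act_image_Φ (σ : Equiv.Perm (Fin n)) :
    act σ '' (Δroot n ∪ -Δroot n) = Δroot n ∪ -Δroot n := by
  rw [Set.image_union, act_image_neg, act_image_Δ]

lemma act_isParabolicIn {σ : Equiv.Perm (Fin n)} {Pt : Set (Fin n → ℝ)}
    (h : IsParabolicIn (Δroot n ∪ -Δroot n) Pt) :
    IsParabolicIn (Δroot n ∪ -Δroot n) (act σ '' Pt) := by
  obtain ⟨hss, hun, hcl⟩ := h
  refine ⟨?_, ?_, ?_⟩
  · rw [Set.ssubset_def] at hss ⊢
    constructor
    · rw [← act_image_Φ σ]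
      exact Set.image_mono hss.1
    · intro hsub
      apply hss.2
      intro v hv
      have hv' : act σ v ∈ act σ '' Pt :=
        hsub (by rw [← act_image_Φ σ]; exact ⟨v, hv, rfl⟩)
      obtain ⟨w, hw, hwv⟩ := hv'
      rwa [← act_injective σ hwv]
  · rw [← act_image_Φ σ, hun, Set.image_union, act_image_neg]
  · rintro α ⟨a, ha, rfl⟩ β ⟨b, hb, rfl⟩ hs
    rw [← act_add] at hs ⊢
    have hab : a + b ∈ Δroot n ∪ -Δroot n := by
      rw [← act_image_Φ σ.symm, mem_act_image, Equiv.symm_symm]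
      exact hs
    exact ⟨a + b, hcl a ha b hb hab, rfl⟩

end Pn

namespace Pn
variable {n : ℕ}
open Pointwise

lemma act_image_inter (σ : Equiv.Perm (Fin n)) (S T : Set (Fin n → ℝ)) :
    act σ '' (S ∩ T) = act σ '' S ∩ act σ '' T :=
  Set.image_inter (act_injective σ)

lemma act_image_diff (σ : Equiv.Perm (Fin n)) (S T : Set (Fin n → ℝ)) :
    act σ '' (S \ T) = act σ '' S \ act σ '' T :=
  Set.image_diff (act_injective σ) S T

lemma act_image_ssubset (σ : Equiv.Perm (Fin n)) {S T : Set (Fin n → ℝ)} (hss : S ⊂ T) :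
    act σ '' S ⊂ act σ '' T := by
  rw [Set.ssubset_def] at hss ⊢
  constructor
  · exact Set.image_mono hss.1
  · intro hsub
    apply hss.2
    intro v hv
    obtain ⟨w, hw, hwv⟩ := hsub ⟨v, hv, rfl⟩
    rwa [← act_injective σ hwv]

lemma act_symm_image (σ : Equiv.Perm (Fin n)) (S : Set (Fin n → ℝ)) :
    act σ.symm '' (act σ '' S) = S := by
  ext v
  rw [mem_act_image, Equiv.symm_symm, mem_act_image, act_act']

lemma act_isLeviDecomp {σ : Equiv.Perm (Fin n)} {Q L N : Set (Fin n → ℝ)}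
    (h : IsLeviDecomp (Δroot n) Q L N) :
    IsLeviDecomp (Δroot n) (act σ '' Q) (act σ '' L) (act σ '' N) := by
  obtain ⟨Pt, hpar, hQ, hL, hN⟩ := h
  refine ⟨act σ '' Pt, act_isParabolicIn hpar, ?_, ?_, ?_⟩
  · rw [hQ, act_image_inter, act_image_Δ]
  · rw [hL, act_image_inter, act_image_inter, act_image_neg, act_image_Δ]
  · rw [hN, act_image_inter, act_image_diff, act_image_neg, act_image_Δ]

lemma act_isCominusculeRoots {σ : Equiv.Perm (Fin n)} {P : Set (Fin n → ℝ)}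
    (h : IsCominusculeRoots (Δroot n) P) :
    IsCominusculeRoots (Δroot n) (act σ '' P) := by
  obtain ⟨⟨hss, Pt, hpar, hQ⟩, L, N, hlevi, hCM⟩ := h
  refine ⟨⟨?_, act σ '' Pt, act_isParabolicIn hpar, ?_⟩,
    act σ '' L, act σ '' N, act_isLeviDecomp hlevi, ?_⟩
  · rw [← act_image_Δ σ]; exact act_image_ssubset σ hss
  · rw [hQ, act_image_inter, act_image_Δ]
  · rintro α ⟨a, ha, rfl⟩ β ⟨b, hb, rfl⟩ hs
    rw [← act_add] at hs
    have : a + b ∈ Δroot n := by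
      rw [← act_image_Δ σ.symm, mem_act_image, Equiv.symm_symm]
      exact hs
    exact hCM a ha b hb this

lemma isCom_of_act {σ : Equiv.Perm (Fin n)} {P : Set (Fin n → ℝ)}
    (h : IsCominusculeRoots (Δroot n) (act σ '' P)) :
    IsCominusculeRoots (Δroot n) P := by
  have := act_isCominusculeRoots (σ := σ.symm) h
  rwa [act_symm_image] at this

end Pn

namespace Pn
variable {n : ℕ}
open Pointwise

/-- Build a permutation sorting a predicate to an initial segment. -/
lemma exists_sorting_perm (A : Fin n → Prop) :
    ∃ (σ : Equiv.Perm (Fin n)) (p : ℕ), p ≤ n ∧ (∀ i, A i ↔ (σ i : ℕ) < p) ∧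
      ((∃ i, A i) → 1 ≤ p) ∧ ((∃ i, ¬A i) → p < n) := by
  classical
  set p := Fintype.card {x : Fin n // A x} with hp
  have hpn : p ≤ n := by
    have := Fintype.card_subtype_le A
    simpa using this
  have hcompl : Fintype.card {x : Fin n // ¬A x} = n - p := by
    have := Fintype.card_subtype_compl A
    rw [this, Fintype.card_fin]
  have tA : {x : Fin n // (x:ℕ) < p} ≃ Fin p :=
    { toFun := fun x => ⟨x.1, x.2⟩
      invFun := fun y => ⟨⟨y.1, lt_of_lt_of_le y.2 hpn⟩, y.2⟩
      left_inv := fun x => by ext; rfl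
      right_inv := fun y => rfl }
  have tB : {x : Fin n // ¬((x:ℕ) < p)} ≃ Fin (n - p) :=
    { toFun := fun x => ⟨x.1 - p, by have := x.1.isLt; have := x.2; omega⟩
      invFun := fun y => ⟨⟨y.1 + p, by have := y.isLt; omega⟩, by simp⟩
      left_inv := fun x => by
        ext
        have := x.2
        simp only [Fin.val_mk]
        omega
      right_inv := fun y => by
        ext
        simp }
  have e1 : {x : Fin n // A x} ≃ Fin p := Fintype.equivFinOfCardEq rfl
  have e2 : {x : Fin n // ¬A x} ≃ Fin (n - p) := Fintype.equivFinOfCardEq hcompl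
  refine ⟨(Equiv.sumCompl A).symm.trans ((Equiv.sumCongr (e1.trans tA.symm)
    (e2.trans tB.symm)).trans (Equiv.sumCompl (fun x : Fin n => (x:ℕ) < p))), p, hpn, ?_, ?_, ?_⟩
  · intro i
    constructor
    · intro hi
      rw [Equiv.trans_apply, Equiv.trans_apply, Equiv.sumCompl_symm_apply_of_pos hi]
      simp only [Equiv.sumCongr_apply, Sum.map_inl, Equiv.sumCompl_apply_inl]
      exact ((tA.symm (e1 ⟨i, hi⟩))).2
    · intro hi
      by_contra hA
      rw [Equiv.trans_apply, Equiv.trans_apply, Equiv.sumCompl_symm_apply_of_neg hA] at hi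
      simp only [Equiv.sumCongr_apply, Sum.map_inr, Equiv.sumCompl_apply_inr] at hi
      exact ((tB.symm (e2 ⟨i, hA⟩))).2 hi
  · rintro ⟨i, hi⟩
    have : 0 < p := Fintype.card_pos_iff.mpr ⟨⟨i, hi⟩⟩
    omega
  · rintro ⟨i, hi⟩
    have : 0 < Fintype.card {x : Fin n // ¬A x} := Fintype.card_pos_iff.mpr ⟨⟨i, hi⟩⟩
    omega

/-- Compute the image of a set of roots under `act σ` from a shape description. -/
lemma act_image_eq_shape {σ : Equiv.Perm (Fin n)} {P : Set (Fin n → ℝ)}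
    (hPΔ : P ⊆ Δroot n) (Rs Rp Rm : Fin n → Fin n → Prop)
    (hRmd : ∀ i, ¬ Rm i i)
    (hs : ∀ i j, i ≠ j → (sub i j ∈ P ↔ Rs (σ i) (σ j)))
    (hp : ∀ i j, pos i j ∈ P ↔ Rp (σ i) (σ j))
    (hm : ∀ i j, i ≠ j → (neg i j ∈ P ↔ Rm (σ i) (σ j))) :
    act σ '' P = shape Rs Rp Rm := by
  ext v
  constructor
  · rintro ⟨w, hw, rfl⟩
    have hwΔ := hPΔ hw
    rw [Δroot_eq_shape] at hwΔ
    rcases hwΔ with ⟨i, j, hij, -, rfl⟩ | ⟨i, j, -, rfl⟩ | ⟨i, j, hij, rfl⟩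
    · rw [act_sub]
      exact Or.inl ⟨σ i, σ j, fun h => hij (σ.injective h), (hs i j hij).mp hw, rfl⟩
    · rw [act_pos]
      exact Or.inr (Or.inl ⟨σ i, σ j, (hp i j).mp hw, rfl⟩)
    · rw [act_neg]
      exact Or.inr (Or.inr ⟨σ i, σ j, (hm i j hij).mp hw, rfl⟩)
  · rintro (⟨a, b, hab, hR, rfl⟩ | ⟨a, b, hR, rfl⟩ | ⟨a, b, hR, rfl⟩)
    · refine ⟨sub (σ.symm a) (σ.symm b), ?_, ?_⟩
      · refine (hs _ _ (fun h => hab (by rw [← σ.apply_symm_apply a, ← σ.apply_symm_apply b, h]))).mpr ?_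
        rwa [σ.apply_symm_apply, σ.apply_symm_apply]
      · rw [act_sub, σ.apply_symm_apply, σ.apply_symm_apply]
    · refine ⟨pos (σ.symm a) (σ.symm b), ?_, ?_⟩
      · refine (hp _ _).mpr ?_
        rwa [σ.apply_symm_apply, σ.apply_symm_apply]
      · rw [act_pos, σ.apply_symm_apply, σ.apply_symm_apply]
    · have hab : a ≠ b := by rintro rfl; exact hRmd a hR
      refine ⟨neg (σ.symm a) (σ.symm b), ?_, ?_⟩
      · refine (hm _ _ (fun h => hab (by rw [← σ.apply_symm_apply a, ← σ.apply_symm_apply b, h]))).mpr ?_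
        rwa [σ.apply_symm_apply, σ.apply_symm_apply]
      · rw [act_neg, σ.apply_symm_apply, σ.apply_symm_apply]

end Pn

namespace Pn
variable {n : ℕ}
open Pointwise

lemma exists_third (hn : 3 ≤ n) (x y : Fin n) : ∃ z : Fin n, z ≠ x ∧ z ≠ y := by
  classical
  have hcard : ({x, y} : Finset (Fin n)).card ≤ 2 :=
    (Finset.card_insert_le x {y}).trans (by simp)
  have hne : (Finset.univ \ ({x, y} : Finset (Fin n))).Nonempty := by
    rw [← Finset.card_pos, Finset.card_sdiff_of_subset (Finset.subset_univ _)]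
    have : (Finset.univ : Finset (Fin n)).card = n := by simp
    omega
  obtain ⟨z, hz⟩ := hne
  simp only [Finset.mem_sdiff, Finset.mem_univ, Finset.mem_insert, Finset.mem_singleton,
    true_and] at hz
  push_neg at hz
  exact ⟨z, hz.1, hz.2⟩

theorem classify (hn : 3 ≤ n) {S : Set (Fin n → ℝ)}
    (h : IsCominusculeRoots (Δroot n) S) :
    ∃ σ : Equiv.Perm (Fin n),
      (∃ n₀ ≤ n, act σ '' S = P n n₀) ∨ act σ '' S = Pminus0 n := by
  obtain ⟨⟨hPss, -⟩, L, N, ⟨Pt, ⟨hss, hun, hcl⟩, hPQ, -, hNdef⟩, hCM⟩ := h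
  rw [Set.ssubset_def] at hss
  have hPΔ : S ⊆ Δroot n := hPss.subset
  have htotD : ∀ i j : Fin n, i ≠ j → sub i j ∈ Pt ∨ sub j i ∈ Pt := by
    intro i j hij
    have hm : sub i j ∈ Pt ∪ -Pt := by rw [← hun]; exact sub_mem_Φ hij
    rcases hm with hm | hm
    · exact Or.inl hm
    · rw [Set.mem_neg, neg_sub_eq] at hm; exact Or.inr hm
  have htotUW : ∀ i j : Fin n, pos i j ∈ Pt ∨ neg i j ∈ Pt := by
    intro i j
    have hm : pos i j ∈ Pt ∪ -Pt := by rw [← hun]; exact pos_mem_Φ i j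
    rcases hm with hm | hm
    · exact Or.inl hm
    · rw [Set.mem_neg, neg_pos_eq] at hm; exact Or.inr hm
  have hC1 : ∀ i j k : Fin n, i ≠ k → sub i j ∈ Pt → sub j k ∈ Pt → sub i k ∈ Pt := by
    intro i j k hik h1 h2
    have := hcl _ h1 _ h2 (by rw [sub_add_sub]; exact sub_mem_Φ hik)
    rwa [sub_add_sub] at this
  have hC2 : ∀ i j k : Fin n, sub i j ∈ Pt → pos j k ∈ Pt → pos i k ∈ Pt := by
    intro i j k h1 h2
    have := hcl _ h1 _ h2 (by rw [sub_add_pos]; exact pos_mem_Φ i k)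
    rwa [sub_add_pos] at this
  have hC3 : ∀ i j k : Fin n, sub i j ∈ Pt → neg i k ∈ Pt → neg j k ∈ Pt := by
    intro i j k h1 h2
    have := hcl _ h1 _ h2 (by rw [sub_add_neg]; exact neg_mem_Φ' j k)
    rwa [sub_add_neg] at this
  have hC4 : ∀ i j k : Fin n, i ≠ k → pos i j ∈ Pt → neg j k ∈ Pt → sub i k ∈ Pt := by
    intro i j k hik h1 h2
    have := hcl _ h1 _ h2 (by rw [pos_add_neg]; exact sub_mem_Φ hik)
    rwa [pos_add_neg] at this
  have hPsub : ∀ i j : Fin n, i ≠ j → (sub i j ∈ S ↔ sub i j ∈ Pt) := by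
    intro i j hij; rw [hPQ]
    exact ⟨fun h => h.1, fun h => ⟨h, sub_mem_Δ hij⟩⟩
  have hPpos : ∀ i j : Fin n, (pos i j ∈ S ↔ pos i j ∈ Pt) := by
    intro i j; rw [hPQ]; exact ⟨fun h => h.1, fun h => ⟨h, pos_mem_Δ i j⟩⟩
  have hPneg : ∀ i j : Fin n, i ≠ j → (neg i j ∈ S ↔ neg i j ∈ Pt) := by
    intro i j hij; rw [hPQ]; exact ⟨fun h => h.1, fun h => ⟨h, neg_mem_Δ hij⟩⟩
  have hNsub : ∀ i j : Fin n, i ≠ j → sub i j ∈ Pt → sub j i ∉ Pt → sub i j ∈ N := by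
    intro i j hij h1 h2
    rw [hNdef]
    exact ⟨⟨h1, fun hc => h2 (by rwa [Set.mem_neg, neg_sub_eq] at hc)⟩, sub_mem_Δ hij⟩
  have hNpos : ∀ i j : Fin n, pos i j ∈ Pt → neg i j ∉ Pt → pos i j ∈ N := by
    intro i j h1 h2
    rw [hNdef]
    exact ⟨⟨h1, fun hc => h2 (by rwa [Set.mem_neg, neg_pos_eq] at hc)⟩, pos_mem_Δ i j⟩
  have hNneg : ∀ i j : Fin n, i ≠ j → neg i j ∈ Pt → pos i j ∉ Pt → neg i j ∈ N := by
    intro i j hij h1 h2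
    rw [hNdef]
    exact ⟨⟨h1, fun hc => h2 (by rwa [Set.mem_neg, neg_neg_eq] at hc)⟩, neg_mem_Δ hij⟩
  have hM0 : ∀ i j k : Fin n, i ≠ j → j ≠ k → sub i j ∈ Pt → sub j i ∉ Pt →
      sub j k ∈ Pt → sub k j ∉ Pt → False := by
    intro i j k hij hjk h1 h2 h3 h4
    by_cases hik : i = k
    · subst hik; exact h2 h3
    · exact hCM _ (hNsub i j hij h1 h2) _ (hNsub j k hjk h3 h4)
        (by rw [sub_add_sub]; exact sub_mem_Δ hik)
  have hM1 : ∀ i j k : Fin n, i ≠ j → sub i j ∈ Pt → sub j i ∉ Pt →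
      pos j k ∈ Pt → neg j k ∈ Pt := by
    intro i j k hij h1 h2 h3
    by_contra hng
    exact hCM _ (hNsub i j hij h1 h2) _ (hNpos j k h3 hng)
      (by rw [sub_add_pos]; exact pos_mem_Δ i k)
  have hM2 : ∀ i j k : Fin n, i ≠ j → sub i j ∈ Pt → sub j i ∉ Pt → k ≠ i → k ≠ j →
      neg i k ∈ Pt → pos i k ∈ Pt := by
    intro i j k hij h1 h2 hki hkj h3
    by_contra hng
    exact hCM _ (hNsub i j hij h1 h2) _ (hNneg i k (fun hh => hki hh.symm) h3 hng)
      (by rw [sub_add_neg]; exact neg_mem_Δ (fun hh => hkj hh.symm))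
  have hM3 : ∀ i j l : Fin n, i ≠ l → j ≠ l → pos i j ∈ Pt → neg i j ∉ Pt →
      neg j l ∈ Pt → pos j l ∈ Pt := by
    intro i j l hil hjl h1 h2 h3
    by_contra hng
    exact hCM _ (hNpos i j h1 h2) _ (hNneg j l hjl h3 hng)
      (by rw [pos_add_neg]; exact sub_mem_Δ hil)
  by_cases hA : ∀ i j : Fin n, i ≠ j → sub i j ∈ Pt
  · -- Case 1 : a single class
    have tU : ∀ i j k l : Fin n, pos i j ∈ Pt → pos k l ∈ Pt := by
      intro i j k l hij
      have step2 : pos j k ∈ Pt := by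
        have step1 : pos k j ∈ Pt := by
          by_cases hki : k = i
          · subst hki; exact hij
          · exact hC2 k i j (hA k i hki) hij
        rwa [pos_comm] at step1
      have step3 : pos l k ∈ Pt := by
        by_cases hlj : l = j
        · subst hlj; exact step2
        · exact hC2 l j k (hA l j hlj) step2
      rwa [pos_comm] at step3
    have tW : ∀ i j k l : Fin n, neg i j ∈ Pt → neg k l ∈ Pt := by
      intro i j k l hij
      have step2 : neg j k ∈ Pt := by
        have step1 : neg k j ∈ Pt := by
          by_cases hik : i = k
          · subst hik; exact hij
          · exact hC3 i k j (hA i k hik) hij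
        rwa [neg_comm] at step1
      have step3 : neg l k ∈ Pt := by
        by_cases hjl : j = l
        · subst hjl; exact step2
        · exact hC3 j l k (hA j l hjl) step2
      rwa [neg_comm] at step3
    by_cases hU : pos ⟨0, by omega⟩ ⟨0, by omega⟩ ∈ Pt
    · by_cases hW : neg (⟨0, by omega⟩ : Fin n) ⟨0, by omega⟩ ∈ Pt
      · exfalso
        apply hss.2
        intro v hv
        rw [Φ_eq_shape] at hv
        rcases hv with ⟨i, j, hij, -, rfl⟩ | ⟨i, j, -, rfl⟩ | ⟨i, j, -, rfl⟩
        · exact hA i j hij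
        · exact tU _ _ i j hU
        · exact tW _ _ i j hW
      · -- S = P0
        refine ⟨1, Or.inl ⟨0, by omega, ?_⟩⟩
        have hP0 : P n 0 = P0 n := by simp [P]
        rw [hP0, P0_eq_shape]
        apply act_image_eq_shape hPΔ
        · exact fun i h => h
        · intro i j hij
          exact ⟨fun _ => trivial, fun _ => (hPsub i j hij).mpr (hA i j hij)⟩
        · intro i j
          exact ⟨fun _ => trivial, fun _ => (hPpos i j).mpr (tU _ _ i j hU)⟩
        · intro i j hij
          exact ⟨fun hf => hW (tW i j _ _ ((hPneg i j hij).mp hf)), False.elim⟩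
    · by_cases hW : neg (⟨0, by omega⟩ : Fin n) ⟨0, by omega⟩ ∈ Pt
      · -- S = Pminus0
        refine ⟨1, Or.inr ?_⟩
        rw [Pminus0_eq_shape]
        apply act_image_eq_shape hPΔ
        · exact fun i h => h rfl
        · intro i j hij
          exact ⟨fun _ => trivial, fun _ => (hPsub i j hij).mpr (hA i j hij)⟩
        · intro i j
          exact ⟨fun hf => hU (tU i j _ _ ((hPpos i j).mp hf)), False.elim⟩
        · intro i j hij
          refine ⟨fun _ => ?_, fun _ => (hPneg i j hij).mpr (tW _ _ i j hW)⟩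
          simpa using hij
      · rcases htotUW ⟨0, by omega⟩ ⟨0, by omega⟩ with h | h
        · exact absurd h hU
        · exact absurd h hW
  · -- Case 2 : two classes
    push_neg at hA
    obtain ⟨a, b, hab, hnab⟩ := hA
    have hD0 : sub b a ∈ Pt := (htotD a b hab).resolve_left hnab
    have hij0 : b ≠ a := fun h => hab h.symm
    -- i0 = b, j0 = a ; inB j ↔ sub b j ∈ Pt ∧ sub j b ∉ Pt
    have hBj0 : sub b a ∈ Pt ∧ sub a b ∉ Pt := ⟨hD0, hnab⟩
    have hAi0 : ¬(sub b b ∈ Pt ∧ sub b b ∉ Pt) := fun h => h.2 h.1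
    have key1 : ∀ i, ¬(sub b i ∈ Pt ∧ sub i b ∉ Pt) → i ≠ b →
        sub i b ∈ Pt ∧ sub b i ∈ Pt := by
      intro i hi hib
      have h1 : sub i b ∈ Pt := by
        by_contra hc
        exact hi ⟨(htotD b i (fun hh => hib hh.symm)).resolve_right hc, hc⟩
      refine ⟨h1, ?_⟩
      by_contra hc
      exact hM0 i b a hib hij0 h1 hc hD0 hnab
    have key2 : ∀ i j, ¬(sub b i ∈ Pt ∧ sub i b ∉ Pt) → (sub b j ∈ Pt ∧ sub j b ∉ Pt) →
        sub i j ∈ Pt ∧ sub j i ∉ Pt := by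
      intro i j hi hj
      have hij : i ≠ j := fun h => hi (h ▸ hj)
      have hjb : j ≠ b := fun h => hAi0 (h ▸ hj)
      constructor
      · by_cases hib : i = b
        · subst hib; exact hj.1
        · exact hC1 i b j hij (key1 i hi hib).1 hj.1
      · intro hc
        by_cases hib : i = b
        · subst hib; exact hj.2 hc
        · exact hj.2 (hC1 j i b hjb hc (key1 i hi hib).1)
    have key3 : ∀ j j', (sub b j ∈ Pt ∧ sub j b ∉ Pt) → (sub b j' ∈ Pt ∧ sub j' b ∉ Pt) →
        j ≠ j' → sub j j' ∈ Pt := by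
      intro j j' hj hj' hne
      by_contra hc
      have h1 : sub j' j ∈ Pt := (htotD j j' hne).resolve_left hc
      exact hM0 b j' j (fun h => hAi0 (h ▸ hj')) (fun h => hne h.symm) hj'.1 hj'.2 h1 hc
    have key4 : ∀ i i', ¬(sub b i ∈ Pt ∧ sub i b ∉ Pt) → ¬(sub b i' ∈ Pt ∧ sub i' b ∉ Pt) →
        i ≠ i' → sub i i' ∈ Pt := by
      intro i i' hi hi' hne
      by_cases hib : i = b
      · by_cases hi'b : i' = b
        · exact absurd (hib.trans hi'b.symm) hne
        · rw [hib]; exact (key1 i' hi' hi'b).2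
      · by_cases hi'b : i' = b
        · rw [hi'b]; exact (key1 i hi hib).1
        · exact hC1 i b i' hne (key1 i hi hib).1 (key1 i' hi' hi'b).2
    by_cases hcrU : ∀ i j, ¬(sub b i ∈ Pt ∧ sub i b ∉ Pt) → (sub b j ∈ Pt ∧ sub j b ∉ Pt) →
        pos i j ∈ Pt
    · -- Pmid case
      have crossW : ∀ i j, ¬(sub b i ∈ Pt ∧ sub i b ∉ Pt) → (sub b j ∈ Pt ∧ sub j b ∉ Pt) →
          neg i j ∈ Pt := by
        intro i j hi hj
        have h1 := key2 i j hi hj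
        have h2 : pos j i ∈ Pt := by rw [pos_comm]; exact hcrU i j hi hj
        have h3 := hM1 i j i (fun h => hi (h ▸ hj)) h1.1 h1.2 h2
        rwa [neg_comm] at h3
      have AU : ∀ i i', ¬(sub b i ∈ Pt ∧ sub i b ∉ Pt) → ¬(sub b i' ∈ Pt ∧ sub i' b ∉ Pt) →
          pos i i' ∈ Pt := by
        intro i i' hi hi'
        by_cases hne : i = i'
        · subst hne
          by_contra hc
          have hWd : neg i i ∈ Pt := (htotUW i i).resolve_left hc
          have h4 := hC4 a i i (fun h => hi (h.symm ▸ hBj0))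
            (by rw [pos_comm]; exact hcrU i a hi hBj0) hWd
          exact (key2 i a hi hBj0).2 h4
        · rcases htotUW i i' with h | h
          · exact h
          · exact hM2 i a i' (fun h => hi (h ▸ hBj0)) (key2 i a hi hBj0).1
              (key2 i a hi hBj0).2 (fun h => hne h.symm) (fun h => hi' (h ▸ hBj0)) h
      have AnotW : ∀ i i', ¬(sub b i ∈ Pt ∧ sub i b ∉ Pt) → ¬(sub b i' ∈ Pt ∧ sub i' b ∉ Pt) →
          i ≠ i' → neg i i' ∉ Pt := by
        intro i i' hi hi' hne hc
        have h4 := hC4 a i' i (fun h => hi (h.symm ▸ hBj0))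
          (by rw [pos_comm]; exact hcrU i' a hi' hBj0)
          (by rw [neg_comm]; exact hc)
        exact (key2 i a hi hBj0).2 h4
      have BnotU : ∀ j j', (sub b j ∈ Pt ∧ sub j b ∉ Pt) → (sub b j' ∈ Pt ∧ sub j' b ∉ Pt) →
          pos j j' ∉ Pt := by
        intro j j' hj hj' hc
        have h4 := hC4 j j' b (fun h => hAi0 (h.symm ▸ hj)) hc
          (by rw [neg_comm]; exact crossW b j' hAi0 hj')
        exact hj.2 h4
      have BW : ∀ j j', (sub b j ∈ Pt ∧ sub j b ∉ Pt) → (sub b j' ∈ Pt ∧ sub j' b ∉ Pt) →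
          neg j j' ∈ Pt := fun j j' hj hj' =>
        (htotUW j j').resolve_left (BnotU j j' hj hj')
      obtain ⟨σ, p, hpn, hσ, hp1, hp2⟩ :=
        exists_sorting_perm (fun i => ¬(sub b i ∈ Pt ∧ sub i b ∉ Pt))
      have hp1' : 1 ≤ p := hp1 ⟨b, hAi0⟩
      have hp2' : p < n := hp2 ⟨a, not_not_intro hBj0⟩
      refine ⟨σ, Or.inl ⟨p, hpn, ?_⟩⟩
      have hPn : P n p = Pmid n p := by
        have h1 : p ≠ 0 := by omega
        have h2 : p ≠ n := by omega
        simp [P, h1, h2]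
      rw [hPn, Pmid_eq_shape]
      apply act_image_eq_shape hPΔ
      · rintro i ⟨h1, -⟩; exact h1 rfl
      · intro i j hij
        rw [hPsub i j hij]
        constructor
        · intro hD
          by_cases hi : sub b i ∈ Pt ∧ sub i b ∉ Pt
          · right
            by_cases hj : sub b j ∈ Pt ∧ sub j b ∉ Pt
            · have := (hσ j)
              by_contra hc
              exact (not_not_intro hj) (this.mpr (by omega))
            · exact absurd hD (key2 j i hj hi).2
          · left; exact (hσ i).mp hi
        · intro hR
          rcases hR with hR | hR
          · have hi := (hσ i).mpr hR
            by_cases hj : sub b j ∈ Pt ∧ sub j b ∉ Pt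
            · exact (key2 i j hi hj).1
            · exact key4 i j hi hj hij
          · have hj : sub b j ∈ Pt ∧ sub j b ∉ Pt := by
              by_contra hj
              have := (hσ j).mp hj; omega
            by_cases hi : sub b i ∈ Pt ∧ sub i b ∉ Pt
            · exact key3 i j hi hj hij
            · exact (key2 i j hi hj).1
      · intro i j
        rw [hPpos i j]
        constructor
        · intro hUc
          by_contra hR
          push_neg at hR
          obtain ⟨h1, h2⟩ := hR
          have hi : sub b i ∈ Pt ∧ sub i b ∉ Pt := by
            by_contra hi; have := (hσ i).mp hi; omega
          have hj : sub b j ∈ Pt ∧ sub j b ∉ Pt := by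
            by_contra hj; have := (hσ j).mp hj; omega
          exact BnotU i j hi hj hUc
        · intro hR
          rcases hR with hR | hR
          · have hi := (hσ i).mpr hR
            by_cases hj : sub b j ∈ Pt ∧ sub j b ∉ Pt
            · exact hcrU i j hi hj
            · exact AU i j hi hj
          · have hj := (hσ j).mpr hR
            rw [pos_comm]
            by_cases hi : sub b i ∈ Pt ∧ sub i b ∉ Pt
            · exact hcrU j i hj hi
            · exact AU j i hj hi
      · intro i j hij
        rw [hPneg i j hij]
        constructor
        · intro hWc
          refine ⟨fun h => hij (σ.injective h), ?_⟩
          by_contra hR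
          push_neg at hR
          have hi := (hσ i).mpr (by omega)
          have hj := (hσ j).mpr (by omega)
          exact AnotW i j hi hj hij hWc
        · rintro ⟨-, hR⟩
          rcases hR with hR | hR
          · have hi : sub b i ∈ Pt ∧ sub i b ∉ Pt := by
              by_contra hi
              have := (hσ i).mp hi; omega
            by_cases hj : sub b j ∈ Pt ∧ sub j b ∉ Pt
            · exact BW i j hi hj
            · rw [neg_comm]; exact crossW j i hj hi
          · have hj : sub b j ∈ Pt ∧ sub j b ∉ Pt := by
              by_contra hj
              have := (hσ j).mp hj; omega
            by_cases hi : sub b i ∈ Pt ∧ sub i b ∉ Pt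
            · exact BW i j hi hj
            · exact crossW i j hi hj
    · -- Plast case
      push_neg at hcrU
      obtain ⟨a1, b1, ha1d, hb1, hcr⟩ := hcrU
      have ha1 : ¬(sub b a1 ∈ Pt ∧ sub a1 b ∉ Pt) := fun hx => hx.2 (ha1d hx.1)
      have c1 : ∀ i j, ¬(sub b i ∈ Pt ∧ sub i b ∉ Pt) → (sub b j ∈ Pt ∧ sub j b ∉ Pt) →
          pos i j ∉ Pt := by
        intro i j hi hj hc
        apply hcr
        have s2 : pos j a1 ∈ Pt := by
          have s1 : pos a1 j ∈ Pt := by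
            by_cases h : a1 = i
            · subst h; exact hc
            · exact hC2 a1 i j (key4 a1 i ha1 hi h) hc
          rwa [pos_comm] at s1
        have s3 : pos b1 a1 ∈ Pt := by
          by_cases h : b1 = j
          · subst h; exact s2
          · exact hC2 b1 j a1 (key3 b1 j hb1 hj h) s2
        rwa [pos_comm] at s3
      have c2 : ∀ i j, ¬(sub b i ∈ Pt ∧ sub i b ∉ Pt) → (sub b j ∈ Pt ∧ sub j b ∉ Pt) →
          neg i j ∈ Pt := fun i j hi hj => (htotUW i j).resolve_left (c1 i j hi hj)
      have c3 : ∀ j, (sub b j ∈ Pt ∧ sub j b ∉ Pt) → j = a := by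
        intro j hj
        by_contra hne
        exact c1 b j hAi0 hj
          (hM2 b a j hij0 hD0 hnab (fun h => hAi0 (h ▸ hj)) hne (c2 b j hAi0 hj))
      have c4U : ∀ i i', ¬(sub b i ∈ Pt ∧ sub i b ∉ Pt) → ¬(sub b i' ∈ Pt ∧ sub i' b ∉ Pt) →
          i ≠ i' → pos i i' ∈ Pt := by
        intro i i' hi hi' hne
        rcases htotUW i i' with h | h
        · exact h
        · exact hM2 i a i' (fun h => hi (h ▸ hBj0)) (key2 i a hi hBj0).1
            (key2 i a hi hBj0).2 (fun h => hne h.symm) (fun h => hi' (h ▸ hBj0)) h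
      have c4W : ∀ i i', ¬(sub b i ∈ Pt ∧ sub i b ∉ Pt) → ¬(sub b i' ∈ Pt ∧ sub i' b ∉ Pt) →
          i ≠ i' → neg i i' ∈ Pt := by
        intro i i' hi hi' hne
        by_contra hc
        apply c1 i a hi hBj0
        exact hM3 i' i a (fun h => hi' (h ▸ hBj0)) (fun h => hi (h ▸ hBj0))
          (by rw [pos_comm]; exact c4U i i' hi hi' hne)
          (fun hx => hc (by rwa [neg_comm] at hx))
          (c2 i a hi hBj0)
      have c5 : ∀ i, ¬(sub b i ∈ Pt ∧ sub i b ∉ Pt) → pos i i ∈ Pt := by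
        intro i hi
        obtain ⟨i', hi'ne, hi'a⟩ := exists_third hn i a
        have hi' : ¬(sub b i' ∈ Pt ∧ sub i' b ∉ Pt) := fun hB => hi'a (c3 i' hB)
        exact hC2 i i' i (key4 i i' hi hi' (fun h => hi'ne h.symm))
          (by rw [pos_comm]; exact c4U i i' hi hi' (fun h => hi'ne h.symm))
      have c6 : pos a a ∉ Pt := by
        intro hc
        have h4 := hC4 a a b (fun h => hij0 h.symm) hc
          (by rw [neg_comm]; exact c2 b a hAi0 hBj0)
        exact hnab h4
      have hlastlt : n - 1 < n := by omega
      set lastI : Fin n := ⟨n - 1, hlastlt⟩ with hlastI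
      have hswap : ∀ x : Fin n, ((Equiv.swap a lastI x : Fin n) : ℕ) < n - 1 ↔ x ≠ a := by
        intro x
        by_cases hx : x = a
        · subst hx
          rw [Equiv.swap_apply_left]
          simp [hlastI]
        · by_cases hx' : x = lastI
          · subst hx'
            rw [Equiv.swap_apply_right]
            have hav : (a : ℕ) ≠ n - 1 := fun h => hx (Fin.val_injective (by rw [h])).symm
            have := a.isLt
            simp only [ne_eq, hx, not_false_eq_true, iff_true]
            omega
          · rw [Equiv.swap_apply_of_ne_of_ne hx hx']
            have h1 : (x : ℕ) ≠ n - 1 := fun h => hx' (Fin.val_injective (by rw [h]))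
            have := x.isLt
            simp only [ne_eq, hx, not_false_eq_true, iff_true]
            omega
      refine ⟨Equiv.swap a lastI, Or.inl ⟨n, le_refl n, ?_⟩⟩
      have hPn : P n n = Plast n := by
        have h0 : n ≠ 0 := by omega
        simp [P, h0]
      rw [hPn, Plast_eq_shape]
      apply act_image_eq_shape hPΔ
      · exact fun i h => h rfl
      · intro i j hij
        rw [hPsub i j hij, hswap]
        constructor
        · intro hD hia
          have hj : ¬(sub b j ∈ Pt ∧ sub j b ∉ Pt) :=
            fun hB => hij (hia.trans (c3 j hB).symm)
          exact (key2 j a hj hBj0).2 (hia ▸ hD)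
        · intro hi
          have hiA : ¬(sub b i ∈ Pt ∧ sub i b ∉ Pt) := fun hB => hi (c3 i hB)
          by_cases hj : sub b j ∈ Pt ∧ sub j b ∉ Pt
          · exact (key2 i j hiA hj).1
          · exact key4 i j hiA hj hij
      · intro i j
        rw [hPpos i j, hswap, hswap]
        constructor
        · intro hUc
          have hcon : ∀ x y : Fin n, pos x y ∈ Pt → x ≠ a := by
            intro x y hxy hxa
            subst hxa
            by_cases hy : sub b y ∈ Pt ∧ sub y b ∉ Pt
            · exact c6 (by rwa [c3 y hy] at hxy)
            · exact c1 y x hy hBj0 (by rwa [pos_comm] at hxy)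
          exact ⟨hcon i j hUc, hcon j i (by rwa [pos_comm] at hUc)⟩
        · rintro ⟨hi, hj⟩
          have hiA : ¬(sub b i ∈ Pt ∧ sub i b ∉ Pt) := fun hB => hi (c3 i hB)
          have hjA : ¬(sub b j ∈ Pt ∧ sub j b ∉ Pt) := fun hB => hj (c3 j hB)
          by_cases hne : i = j
          · subst hne; exact c5 i hiA
          · exact c4U i j hiA hjA hne
      · intro i j hij
        rw [hPneg i j hij]
        constructor
        · intro hWc
          exact fun h => hij (Equiv.injective _ h)
        · intro h
          by_cases hi : sub b i ∈ Pt ∧ sub i b ∉ Pt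
          · rw [c3 i hi, neg_comm]
            have hjA : ¬(sub b j ∈ Pt ∧ sub j b ∉ Pt) :=
              fun hB => hij ((c3 i hi).trans (c3 j hB).symm)
            exact c2 j a hjA hBj0
          · by_cases hj : sub b j ∈ Pt ∧ sub j b ∉ Pt
            · rw [c3 j hj]
              exact c2 i a hi hBj0
            · exact c4W i j hi hj hij

end Pn

namespace Pn
variable {n : ℕ}
open Pointwise

/-! ### Recognition lemmas for the models -/

lemma sub_mem_P0 {a b : Fin n} (hab : a ≠ b) : sub a b ∈ P0 n := by
  rw [P0_eq_shape]; exact (sub_mem_shape_iff hab).mpr trivial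
lemma pos_mem_P0 (a b : Fin n) : pos a b ∈ P0 n := by
  rw [P0_eq_shape]; exact (pos_mem_shape_iff (fun _ _ h => h)).mpr trivial
lemma neg_not_mem_P0 (a b : Fin n) : neg a b ∉ P0 n := by
  rw [P0_eq_shape]; exact fun h => (neg_mem_shape_iff (fun _ _ h => h)).mp h

lemma sub_mem_Pminus0 {a b : Fin n} (hab : a ≠ b) : sub a b ∈ Pminus0 n := by
  rw [Pminus0_eq_shape]; exact (sub_mem_shape_iff hab).mpr trivial
lemma pos_not_mem_Pminus0 (a b : Fin n) : pos a b ∉ Pminus0 n := by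
  rw [Pminus0_eq_shape]; exact fun h => (pos_mem_shape_iff (fun _ _ h => h)).mp h
lemma neg_mem_Pminus0_iff {a b : Fin n} : neg a b ∈ Pminus0 n ↔ a ≠ b := by
  rw [Pminus0_eq_shape]; exact neg_mem_shape_iff (fun _ _ h => h.symm)

lemma sub_mem_Pmid_iff {p : ℕ} {a b : Fin n} (hab : a ≠ b) :
    sub a b ∈ Pmid n p ↔ ((a:ℕ) < p ∨ p ≤ (b:ℕ)) := by
  rw [Pmid_eq_shape]; exact sub_mem_shape_iff hab
lemma pos_mem_Pmid_iff {p : ℕ} (a b : Fin n) :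
    pos a b ∈ Pmid n p ↔ ((a:ℕ) < p ∨ (b:ℕ) < p) := by
  rw [Pmid_eq_shape]; exact pos_mem_shape_iff (fun _ _ h => h.symm)
lemma neg_mem_Pmid_iff {p : ℕ} (a b : Fin n) :
    neg a b ∈ Pmid n p ↔ (a ≠ b ∧ (p ≤ (a:ℕ) ∨ p ≤ (b:ℕ))) := by
  rw [Pmid_eq_shape]; exact neg_mem_shape_iff (fun _ _ h => ⟨h.1.symm, h.2.symm⟩)

lemma sub_mem_Plast_iff {a b : Fin n} (hab : a ≠ b) :
    sub a b ∈ Plast n ↔ (a:ℕ) < n - 1 := by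
  rw [Plast_eq_shape]; exact sub_mem_shape_iff hab
lemma pos_mem_Plast_iff (a b : Fin n) :
    pos a b ∈ Plast n ↔ ((a:ℕ) < n - 1 ∧ (b:ℕ) < n - 1) := by
  rw [Plast_eq_shape]; exact pos_mem_shape_iff (fun _ _ h => ⟨h.2, h.1⟩)
lemma neg_mem_Plast_iff (a b : Fin n) : neg a b ∈ Plast n ↔ a ≠ b := by
  rw [Plast_eq_shape]; exact neg_mem_shape_iff (fun _ _ h => h.symm)

lemma P_eq_P0 : P n 0 = P0 n := by simp [P]
lemma P_eq_Plast (h : n ≠ 0) : P n n = Plast n := by simp [P, h]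
lemma P_eq_Pmid {m : ℕ} (h0 : m ≠ 0) (h1 : m ≠ n) : P n m = Pmid n m := by simp [P, h0, h1]

/-! ### Uniqueness of the Levi decomposition for models -/

lemma mem_L_iff {Pt M : Set (Fin n → ℝ)} (hM : M = Pt ∩ Δroot n) {v : Fin n → ℝ} :
    v ∈ Pt ∩ -Pt ∩ Δroot n ↔ v ∈ M ∧ -v ∈ Pt := by
  rw [hM]
  constructor
  · rintro ⟨⟨h1, h2⟩, h3⟩
    exact ⟨⟨h1, h3⟩, Set.mem_neg.mp h2⟩
  · rintro ⟨⟨h1, h3⟩, h2⟩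
    exact ⟨⟨h1, Set.mem_neg.mpr h2⟩, h3⟩

lemma mem_N_iff {Pt M : Set (Fin n → ℝ)} (hM : M = Pt ∩ Δroot n) {v : Fin n → ℝ} :
    v ∈ (Pt \ -Pt) ∩ Δroot n ↔ v ∈ M ∧ -v ∉ Pt := by
  rw [hM]
  constructor
  · rintro ⟨⟨h1, h2⟩, h3⟩
    exact ⟨⟨h1, h3⟩, fun hc => h2 (Set.mem_neg.mpr hc)⟩
  · rintro ⟨⟨h1, h3⟩, h2⟩
    exact ⟨⟨h1, fun hc => h2 (Set.mem_neg.mp hc)⟩, h3⟩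

/-- For a model `M`, whether `-2εᵢ` lies in `Pt` is determined by `M`. -/
lemma model_forced (hn : 3 ≤ n) (M : Set (Fin n → ℝ))
    (hM : (∃ n₀ ≤ n, M = P n n₀) ∨ M = Pminus0 n) :
    (∀ Pt, IsParabolicIn (Δroot n ∪ -Δroot n) Pt → M = Pt ∩ Δroot n →
      ∀ i, pos i i ∈ M → neg i i ∈ Pt) ∨
    (∀ Pt, IsParabolicIn (Δroot n ∪ -Δroot n) Pt → M = Pt ∩ Δroot n →
      ∀ i, pos i i ∈ M → neg i i ∉ Pt) := by
  have hex : ∀ i : Fin n, ∃ j, j ≠ i := by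
    intro i
    obtain ⟨z, hz, -⟩ := exists_third hn i i
    exact ⟨z, hz⟩
  rcases hM with ⟨n₀, hn₀, rfl⟩ | rfl
  · by_cases hlast : n₀ = n
    · -- Plast : forced in
      left
      rintro Pt ⟨-, -, hcl⟩ hPt i hpos
      have hPt' : ∀ x, x ∈ Δroot n → (x ∈ P n n₀ ↔ x ∈ Pt) :=
        fun x hx => by rw [hPt]; exact ⟨fun h => h.1, fun h => ⟨h, hx⟩⟩
      have hMeq : P n n₀ = Plast n := by rw [hlast]; exact P_eq_Plast (by omega)
      rw [hMeq, pos_mem_Plast_iff] at hpos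
      have hlastlt : n - 1 < n := by omega
      obtain ⟨k, hki, hkl⟩ := exists_third hn i ⟨n - 1, hlastlt⟩
      have hkv : (k:ℕ) < n - 1 := by
        have h1 := k.isLt
        have h2 : (k:ℕ) ≠ n - 1 := fun h => hkl (Fin.val_injective (by rw [h]))
        omega
      have h1 : sub k i ∈ Pt := by
        rw [← hPt' _ (sub_mem_Δ hki), hMeq, sub_mem_Plast_iff hki]
        exact hkv
      have h2 : neg k i ∈ Pt := by
        rw [← hPt' _ (neg_mem_Δ hki), hMeq, neg_mem_Plast_iff]
        exact hki
      have h3 := hcl _ h1 _ h2 (by rw [sub_add_neg]; exact neg_mem_Φ' i i)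
      rwa [sub_add_neg] at h3
    · -- P0 or Pmid : forced out
      right
      rintro Pt ⟨-, -, hcl⟩ hPt i hpos hneg
      have hPt' : ∀ x, x ∈ Δroot n → (x ∈ P n n₀ ↔ x ∈ Pt) :=
        fun x hx => by rw [hPt]; exact ⟨fun h => h.1, fun h => ⟨h, hx⟩⟩
      by_cases h0 : n₀ = 0
      · -- P0
        subst h0
        obtain ⟨j, hji⟩ := hex i
        have h1 : sub i j ∈ Pt := by
          rw [← hPt' _ (sub_mem_Δ (fun h => hji h.symm)), P_eq_P0]
          exact sub_mem_P0 (fun h => hji h.symm)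
        have h2 := hcl _ h1 _ hneg (by rw [sub_add_neg]; exact neg_mem_Φ' j i)
        rw [sub_add_neg] at h2
        rw [← hPt' _ (neg_mem_Δ hji), P_eq_P0] at h2
        exact neg_not_mem_P0 j i h2
      · -- Pmid
        rw [P_eq_Pmid h0 hlast, pos_mem_Pmid_iff] at hpos
        have hi : (i:ℕ) < n₀ := by rcases hpos with h | h <;> exact h
        obtain ⟨j, hji⟩ := hex i
        by_cases hj : (j:ℕ) < n₀
        · have h1 : sub i j ∈ Pt := by
            rw [← hPt' _ (sub_mem_Δ (fun h => hji h.symm)), P_eq_Pmid h0 hlast,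
              sub_mem_Pmid_iff (fun h => hji h.symm)]
            exact Or.inl hi
          have h2 := hcl _ h1 _ hneg (by rw [sub_add_neg]; exact neg_mem_Φ' j i)
          rw [sub_add_neg] at h2
          rw [← hPt' _ (neg_mem_Δ hji), P_eq_Pmid h0 hlast, neg_mem_Pmid_iff] at h2
          omega
        · have h1 : pos j i ∈ Pt := by
            rw [← hPt' _ (pos_mem_Δ j i), P_eq_Pmid h0 hlast, pos_mem_Pmid_iff]
            exact Or.inr hi
          have h2 := hcl _ h1 _ hneg (by rw [pos_add_neg]; exact sub_mem_Φ hji)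
          rw [pos_add_neg] at h2
          rw [← hPt' _ (sub_mem_Δ hji), P_eq_Pmid h0 hlast, sub_mem_Pmid_iff hji] at h2
          omega
  · -- Pminus0 : vacuous
    right
    rintro Pt - hPt i hpos -
    exact pos_not_mem_Pminus0 i i hpos

/-- Uniqueness of the Levi decomposition for a model. -/
lemma levi_unique_model (hn : 3 ≤ n) (M : Set (Fin n → ℝ))
    (hM : (∃ n₀ ≤ n, M = P n n₀) ∨ M = Pminus0 n) :
    ∀ L N L' N', IsLeviDecomp (Δroot n) M L N → IsLeviDecomp (Δroot n) M L' N' →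
      L = L' ∧ N = N' := by
  rintro L N L' N' ⟨Pt, hpar, hMPt, hL, hN⟩ ⟨Pt', hpar', hMPt', hL', hN'⟩
  have hMΔ : M ⊆ Δroot n := by rw [hMPt]; exact Set.inter_subset_right
  have hPt1 : ∀ x, x ∈ Δroot n → (x ∈ M ↔ x ∈ Pt) :=
    fun x hx => by rw [hMPt]; exact ⟨fun h => h.1, fun h => ⟨h, hx⟩⟩
  have hPt2 : ∀ x, x ∈ Δroot n → (x ∈ M ↔ x ∈ Pt') :=
    fun x hx => by rw [hMPt']; exact ⟨fun h => h.1, fun h => ⟨h, hx⟩⟩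
  have hkey : ∀ v ∈ M, (-v ∈ Pt ↔ -v ∈ Pt') := by
    intro v hv
    have hvΔ := hMΔ hv
    rw [Δroot_eq_shape] at hvΔ
    rcases hvΔ with ⟨i, j, hij, -, rfl⟩ | ⟨i, j, -, rfl⟩ | ⟨i, j, hij, rfl⟩
    · rw [neg_sub_eq, ← hPt1 _ (sub_mem_Δ hij.symm), ← hPt2 _ (sub_mem_Δ hij.symm)]
    · rw [neg_pos_eq]
      by_cases hij : i = j
      · subst hij
        rcases model_forced hn M hM with hf | hf
        · rw [iff_true_intro (hf Pt hpar hMPt i hv), iff_true_intro (hf Pt' hpar' hMPt' i hv)]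
        · rw [iff_false_intro (hf Pt hpar hMPt i hv), iff_false_intro (hf Pt' hpar' hMPt' i hv)]
      · rw [← hPt1 _ (neg_mem_Δ hij), ← hPt2 _ (neg_mem_Δ hij)]
    · rw [neg_neg_eq, ← hPt1 _ (pos_mem_Δ i j), ← hPt2 _ (pos_mem_Δ i j)]
  have hLL : L = L' := by
    rw [hL, hL']
    ext v
    rw [mem_L_iff hMPt, mem_L_iff hMPt']
    constructor
    · rintro ⟨h1, h2⟩; exact ⟨h1, (hkey v h1).mp h2⟩
    · rintro ⟨h1, h2⟩; exact ⟨h1, (hkey v h1).mpr h2⟩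
  refine ⟨hLL, ?_⟩
  rw [hN, hN']
  ext v
  rw [mem_N_iff hMPt, mem_N_iff hMPt']
  constructor
  · rintro ⟨h1, h2⟩; exact ⟨h1, fun hc => h2 ((hkey v h1).mpr hc)⟩
  · rintro ⟨h1, h2⟩; exact ⟨h1, fun hc => h2 ((hkey v h1).mp hc)⟩

end Pn

namespace Pn
variable {n : ℕ}
open Pointwise

lemma mem_act_image' {σ : Equiv.Perm (Fin n)} {S : Set (Fin n → ℝ)} {x : Fin n → ℝ} :
    act σ x ∈ act σ '' S ↔ x ∈ S := by
  rw [mem_act_image, act_act']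

lemma isCom_P (hn : 3 ≤ n) {m : ℕ} (hm : m ≤ n) :
    IsCominusculeRoots (Δroot n) (P n m) := by
  by_cases h0 : m = 0
  · rw [h0, P_eq_P0]; exact isCom_P0 (by omega)
  · by_cases h1 : m = n
    · rw [h1, P_eq_Plast (by omega)]; exact isCom_Plast (by omega)
    · rw [P_eq_Pmid h0 h1]; exact isCom_Pmid (by omega) (by omega)

lemma pos00_mem_P (hn : 3 ≤ n) {m : ℕ} (hm : m ≤ n) :
    pos (⟨0, by omega⟩ : Fin n) ⟨0, by omega⟩ ∈ P n m := by
  by_cases e0 : m = 0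
  · rw [e0, P_eq_P0]; exact pos_mem_P0 _ _
  · by_cases e1 : m = n
    · rw [e1, P_eq_Plast (by omega), pos_mem_Plast_iff]
      constructor <;> · show (0:ℕ) < n - 1; omega
    · rw [P_eq_Pmid e0 e1, pos_mem_Pmid_iff]
      left
      show (0:ℕ) < m
      omega

lemma not_equiv_Pminus0 (hn : 3 ≤ n) {m : ℕ} (hm : m ≤ n) :
    ¬∃ σ : Equiv.Perm (Fin n), act σ '' P n m = Pminus0 n := by
  rintro ⟨σ, hσ⟩
  have hz := pos00_mem_P hn hm
  have hmem : pos (σ ⟨0, by omega⟩) (σ ⟨0, by omega⟩) ∈ Pminus0 n := by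
    rw [← hσ, ← act_pos]
    exact mem_act_image'.mpr hz
  exact pos_not_mem_Pminus0 _ _ hmem

lemma card_filter_val_lt (c : ℕ) (hc : c ≤ n) :
    (Finset.univ.filter (fun i : Fin n => (i:ℕ) < c)).card = c := by
  have e : {x : Fin n // (x:ℕ) < c} ≃ Fin c :=
    { toFun := fun x => ⟨x.1, x.2⟩
      invFun := fun y => ⟨⟨y.1, lt_of_lt_of_le y.2 hc⟩, y.2⟩
      left_inv := fun x => by ext; rfl
      right_inv := fun y => rfl }
  rw [← Fintype.card_subtype, Fintype.card_congr e, Fintype.card_fin]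

lemma val_lt_of_ne_last (hn : 1 ≤ n) {x : Fin n} (hx : x ≠ ⟨n - 1, by omega⟩) :
    (x : ℕ) < n - 1 := by
  have h1 := x.isLt
  have h2 : (x:ℕ) ≠ n - 1 := fun h => hx (Fin.val_injective (by rw [h]))
  omega

lemma orbit_distinct (hn : 3 ≤ n) {m m' : ℕ} (hm : m ≤ n) (hm' : m' ≤ n)
    (h : ∃ σ : Equiv.Perm (Fin n), act σ '' P n m = P n m') : m = m' := by
  obtain ⟨σ, hσ⟩ := h
  have htrans : ∀ x, x ∈ P n m ↔ act σ x ∈ P n m' := fun x => by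
    rw [← hσ]; exact mem_act_image'.symm
  have hchar : ∀ (k : ℕ), k ≤ n → ∀ i : Fin n,
      (pos i i ∈ P n k ↔ (i:ℕ) < (if k = 0 then n else if k = n then n - 1 else k)) := by
    intro k hk i
    by_cases e0 : k = 0
    · rw [e0, P_eq_P0, if_pos rfl]
      exact iff_of_true (pos_mem_P0 i i) i.isLt
    · rw [if_neg e0]
      by_cases e1 : k = n
      · rw [e1, P_eq_Plast (by omega), pos_mem_Plast_iff, if_pos rfl]
        constructor
        · rintro ⟨h1, -⟩; exact h1
        · intro h1; exact ⟨h1, h1⟩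
      · rw [P_eq_Pmid e0 e1, pos_mem_Pmid_iff, if_neg e1]
        constructor
        · rintro (h1 | h1) <;> exact h1
        · exact Or.inl
  have hiff : ∀ i : Fin n, ((i:ℕ) < (if m = 0 then n else if m = n then n - 1 else m) ↔
      ((σ i : Fin n):ℕ) < (if m' = 0 then n else if m' = n then n - 1 else m')) := by
    intro i
    rw [← hchar m hm i, ← hchar m' hm' (σ i)]
    have := htrans (pos i i)
    rwa [act_pos] at this
  have hcard : (if m = 0 then n else if m = n then n - 1 else m) =
      (if m' = 0 then n else if m' = n then n - 1 else m') := by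
    have hbij : (Finset.univ.filter
          (fun i : Fin n => (i:ℕ) < (if m = 0 then n else if m = n then n - 1 else m))).card =
        (Finset.univ.filter
          (fun i : Fin n => (i:ℕ) < (if m' = 0 then n else if m' = n then n - 1 else m'))).card := by
      apply Finset.card_bij (fun x _ => σ x)
      · intro x hx
        simp only [Finset.mem_filter, Finset.mem_univ, true_and] at hx ⊢
        exact (hiff x).mp hx
      · intro x _ y _ hxy
        exact σ.injective hxy
      · intro y hy
        simp only [Finset.mem_filter, Finset.mem_univ, true_and] at hy ⊢
        refine ⟨σ.symm y, ?_, by rw [Equiv.apply_symm_apply]⟩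
        rw [hiff (σ.symm y), Equiv.apply_symm_apply]
        exact hy
    rwa [card_filter_val_lt _ (by split_ifs <;> omega),
      card_filter_val_lt _ (by split_ifs <;> omega)] at hbij
  by_cases e : m = m'
  · exact e
  exfalso
  have hdisj : (m = n - 1 ∧ m' = n) ∨ (m = n ∧ m' = n - 1) := by
    split_ifs at hcard <;> omega
  have hlt : n - 1 < n := by omega
  rcases hdisj with ⟨e1, e2⟩ | ⟨e1, e2⟩
  · -- m = n-1 (Pmid), m' = n (Plast)
    obtain ⟨u, hu1, -⟩ := exists_third hn (⟨n - 1, hlt⟩ : Fin n) ⟨n - 1, hlt⟩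
    obtain ⟨v, hv2, hv1⟩ := exists_third hn u (⟨n - 1, hlt⟩ : Fin n)
    have huv : u ≠ v := fun hh => hv2 hh.symm
    have hx : neg u v ∉ P n m := by
      rw [e1, P_eq_Pmid (by omega) (by omega), neg_mem_Pmid_iff]
      rintro ⟨-, hcase | hcase⟩
      · have := val_lt_of_ne_last (by omega) hu1; omega
      · have := val_lt_of_ne_last (by omega) hv1; omega
    apply hx
    rw [htrans, act_neg, e2, P_eq_Plast (by omega), neg_mem_Plast_iff]
    exact fun hh => huv (σ.injective hh)
  · -- m = n (Plast), m' = n-1 (Pmid)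
    obtain ⟨u, hu1, -⟩ := exists_third hn (σ.symm ⟨n - 1, hlt⟩) (σ.symm ⟨n - 1, hlt⟩)
    obtain ⟨v, hv2, hv1⟩ := exists_third hn u (σ.symm ⟨n - 1, hlt⟩)
    have huv : u ≠ v := fun hh => hv2 hh.symm
    have hx : neg u v ∈ P n m := by
      rw [e1, P_eq_Plast (by omega), neg_mem_Plast_iff]
      exact huv
    rw [htrans, act_neg, e2, P_eq_Pmid (by omega) (by omega), neg_mem_Pmid_iff] at hx
    obtain ⟨-, hcase | hcase⟩ := hx
    · have hne : σ u ≠ ⟨n - 1, hlt⟩ := fun hh => hu1 (by rw [← hh, Equiv.symm_apply_apply])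
      have := val_lt_of_ne_last (by omega) hne; omega
    · have hne : σ v ≠ ⟨n - 1, hlt⟩ := fun hh => hv1 (by rw [← hh, Equiv.symm_apply_apply])
      have := val_lt_of_ne_last (by omega) hne; omega

end Pn

theorem stmt_13 (n : ℕ) (hn : 3 ≤ n) (P : Set (Fin n → ℝ)) (hP : P ⊆ Pn.Δroot n) :
    -- (a)
    ((IsCominusculeRoots (Pn.Δroot n) P ↔
      ∃ σ : Equiv.Perm (Fin n),
        (∃ n₀ ≤ n, Pn.act σ '' P = Pn.P n n₀) ∨ Pn.act σ '' P = Pn.Pminus0 n) ∧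
     (∀ n₀ ≤ n, IsCominusculeRoots (Pn.Δroot n) (Pn.P n n₀)) ∧
     IsCominusculeRoots (Pn.Δroot n) (Pn.Pminus0 n) ∧
     (∀ n₀ ≤ n, ∀ n₀' ≤ n,
        (∃ σ : Equiv.Perm (Fin n), Pn.act σ '' (Pn.P n n₀) = Pn.P n n₀') → n₀ = n₀') ∧
     (∀ n₀ ≤ n, ¬ ∃ σ : Equiv.Perm (Fin n), Pn.act σ '' (Pn.P n n₀) = Pn.Pminus0 n)) ∧
    -- (b)
    (∀ Q : Set (Fin n → ℝ), IsCominusculeRoots (Pn.Δroot n) Q →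
      ∀ L₁ N₁ L₂ N₂ : Set (Fin n → ℝ),
        IsLeviDecomp (Pn.Δroot n) Q L₁ N₁ → IsLeviDecomp (Pn.Δroot n) Q L₂ N₂ →
        L₁ = L₂ ∧ N₁ = N₂) := by
  constructor
  · refine ⟨⟨fun h => Pn.classify hn h, ?_⟩,
      fun n₀ h₀ => Pn.isCom_P hn h₀,
      Pn.isCom_Pminus0 (by omega),
      fun n₀ h₀ n₀' h₀' h => Pn.orbit_distinct hn h₀ h₀' h,
      fun n₀ h₀ => Pn.not_equiv_Pminus0 hn h₀⟩
    rintro ⟨σ, ⟨n₀, h₀, himg⟩ | himg⟩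
    · exact Pn.isCom_of_act (σ := σ) (by rw [himg]; exact Pn.isCom_P hn h₀)
    · exact Pn.isCom_of_act (σ := σ) (by rw [himg]; exact Pn.isCom_Pminus0 (by omega))
  · intro Q hQ L₁ N₁ L₂ N₂ h1 h2
    obtain ⟨σ, hmodel⟩ := Pn.classify hn hQ
    have h1' := Pn.act_isLeviDecomp (σ := σ) h1
    have h2' := Pn.act_isLeviDecomp (σ := σ) h2
    obtain ⟨hL, hN⟩ := Pn.levi_unique_model hn _ hmodel _ _ _ _ h1' h2'
    have hinj := Set.image_injective.mpr (Pn.act_injective σ)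
    exact ⟨hinj hL, hinj hN⟩
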